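/- arXiv:1507.03245 — 5 statements merged into one kernel-verified Lean document; each statement's English description precedes it below -/
import Mathlib

section
/- If D is a closed convex subset of ℝ^n, X is a random vector with P(X ∈ D) = 1, E[X] exists, and E[X] lies on the boundary of D, then there exist a nonzero vector α ∈ ℝ^n and a constant β ∈ ℝ such that P(⟨X, α⟩ + β = 0) = 1. -/
open MeasureTheory ProbabilityTheory
open scoped RealInnerProductSpace

lemma exists_supporting_vector {E : Type*} [NormedAddCommGroup E] [InnerProductSpace ℝ E]
    [FiniteDimensional ℝ E] {D : Set E} (hDclosed : IsClosed D) (hDconv : Convex ℝ D)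
    {μ : E} (hfront : μ ∈ frontier D) :
    ∃ α : E, α ≠ 0 ∧ ∀ x ∈ D, ⟪x, α⟫ ≤ ⟪μ, α⟫ := by
  have hμD : μ ∈ D := hDclosed.closure_eq ▸ hfront.1
  by_cases hne : (interior D).Nonempty
  · have hμint : μ ∉ interior D := by
      rw [hDclosed.frontier_eq] at hfront
      exact hfront.2
    obtain ⟨f, hf⟩ := geometric_hahn_banach_open_point hDconv.interior isOpen_interior hμint
    obtain ⟨y, hy⟩ := hne
    set α : E := (InnerProductSpace.toDual ℝ E).symm f with hα
    have hαx : ∀ x : E, ⟪α, x⟫ = f x := fun x => InnerProductSpace.toDual_symm_apply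
    refine ⟨α, ?_, ?_⟩
    · intro h0
      have hf0 : f = 0 := by
        have h1 : (InnerProductSpace.toDual ℝ E).symm f =
            (InnerProductSpace.toDual ℝ E).symm 0 := by
          rw [← hα, h0, map_zero]
        exact (InnerProductSpace.toDual ℝ E).symm.injective h1
      exact absurd (hf y hy) (by simp [hf0])
    · intro x hx
      -- limit argument: t • y + (1 - t) • x ∈ interior D for t ∈ (0,1]
      have key : ∀ t : ℝ, 0 < t → t ≤ 1 → t * f y + (1 - t) * f x < f μ := by
        intro t ht ht1
        have hmem : t • y + (1 - t) • x ∈ interior D :=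
          hDconv.combo_interior_closure_mem_interior hy (subset_closure hx) ht
            (by linarith) (by ring)
        have := hf _ hmem
        simpa [map_add, _root_.map_smul, smul_eq_mul] using this
      have hle : f x ≤ f μ := by
        have htend : Filter.Tendsto (fun t : ℝ => t * f y + (1 - t) * f x)
            (nhdsWithin 0 (Set.Ioi 0)) (nhds (f x)) := by
          have : Filter.Tendsto (fun t : ℝ => t * f y + (1 - t) * f x) (nhds 0)
              (nhds (0 * f y + (1 - 0) * f x)) := by
            apply Filter.Tendsto.add
            · exact (continuous_id.mul continuous_const).tendsto 0
            · exact ((continuous_const.sub continuous_id).mul continuous_const).tendsto 0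
          simpa using this.mono_left nhdsWithin_le_nhds
        refine le_of_tendsto htend ?_
        filter_upwards [Ioo_mem_nhdsGT_of_mem (Set.left_mem_Ico.2 one_pos)] with t ht
        exact (key t ht.1 ht.2.le).le
      calc ⟪x, α⟫ = f x := by rw [real_inner_comm]; exact hαx x
        _ ≤ f μ := hle
        _ = ⟪μ, α⟫ := by rw [real_inner_comm]; exact (hαx μ).symm
  · rw [Set.not_nonempty_iff_eq_empty, ← Set.not_nonempty_iff_eq_empty] at hne
    have hspan : affineSpan ℝ D ≠ ⊤ := fun htop =>
      hne (hDconv.interior_nonempty_iff_affineSpan_eq_top.2 htop)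
    have hdir : (affineSpan ℝ D).direction ≠ ⊤ := by
      rwa [Ne, AffineSubspace.direction_eq_top_iff_of_nonempty ⟨μ, mem_affineSpan ℝ hμD⟩]
    have horth : ((affineSpan ℝ D).direction)ᗮ ≠ ⊥ := by
      intro hbot
      apply hdir
      rw [← Submodule.orthogonal_orthogonal (affineSpan ℝ D).direction, hbot,
        Submodule.bot_orthogonal_eq_top]
    obtain ⟨α, hαmem, hα0⟩ := Submodule.exists_mem_ne_zero_of_ne_bot horth
    refine ⟨α, hα0, fun x hx => ?_⟩
    have hxd : x -ᵥ μ ∈ (affineSpan ℝ D).direction :=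
      AffineSubspace.vsub_mem_direction (mem_affineSpan ℝ hx) (mem_affineSpan ℝ hμD)
    have h0 : ⟪x - μ, α⟫ = 0 := (Submodule.mem_orthogonal _ α).1 hαmem _ hxd
    rw [inner_sub_left, sub_eq_zero] at h0
    exact h0.le

theorem exists_supporting_hyperplane_of_mean_frontier {Ω : Type*} [MeasureSpace Ω]
    [IsProbabilityMeasure (ℙ : Measure Ω)] {n : ℕ}
    (D : Set (EuclideanSpace ℝ (Fin n))) (hDclosed : IsClosed D) (hDconv : Convex ℝ D)
    (X : Ω → EuclideanSpace ℝ (Fin n)) (hX : Integrable X)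
    (h : ℙ {ω | X ω ∈ D} = 1)
    (hfront : (∫ ω, X ω) ∈ frontier D) :
    ∃ (α : EuclideanSpace ℝ (Fin n)) (β : ℝ), α ≠ 0 ∧
      ℙ {ω | ⟪X ω, α⟫ + β = 0} = 1 := by
  set μ : EuclideanSpace ℝ (Fin n) := ∫ ω, X ω with hμ
  obtain ⟨α, hα0, hsupp⟩ := exists_supporting_vector hDclosed hDconv hfront
  refine ⟨α, -⟪μ, α⟫, hα0, ?_⟩
  -- X ∈ D almost everywhere
  have hnull : NullMeasurableSet {ω | X ω ∈ D} ℙ :=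
    (hX.aemeasurable.nullMeasurable hDclosed.measurableSet)
  have haeD : ∀ᵐ ω, X ω ∈ D := by
    rw [ae_iff]
    have : ℙ {ω | X ω ∈ D}ᶜ = ℙ Set.univ - ℙ {ω | X ω ∈ D} :=
      measure_compl₀ hnull (measure_ne_top _ _)
    rw [measure_univ, h, tsub_self] at this
    simpa [Set.compl_setOf] using this
  -- the nonneg function with zero integral
  set g : Ω → ℝ := fun ω => ⟪μ, α⟫ - ⟪X ω, α⟫ with hg
  have hgint : Integrable g := (integrable_const _).sub (hX.inner_const α)
  have hgnn : 0 ≤ᵐ[ℙ] g := by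
    filter_upwards [haeD] with ω hω
    exact sub_nonneg.2 (hsupp _ hω)
  have hginteq : ∫ ω, g ω = 0 := by
    have h1 : ∫ ω, ⟪X ω, α⟫ = ⟪μ, α⟫ := by
      have : ∫ ω, ⟪α, X ω⟫ = ⟪α, μ⟫ := integral_inner hX α
      calc ∫ ω, ⟪X ω, α⟫ = ∫ ω, ⟪α, X ω⟫ :=
            integral_congr_ae (Filter.Eventually.of_forall fun ω => real_inner_comm _ _)
        _ = ⟪α, μ⟫ := this
        _ = ⟪μ, α⟫ := real_inner_comm _ _
    rw [hg, integral_sub (integrable_const _) (hX.inner_const α), h1, integral_const,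
      probReal_univ, one_smul, sub_self]
  have hgzero : g =ᵐ[ℙ] 0 := (integral_eq_zero_iff_of_nonneg_ae hgnn hgint).1 hginteq
  have hfinal : ∀ᵐ ω, ⟪X ω, α⟫ + -⟪μ, α⟫ = 0 := by
    filter_upwards [hgzero] with ω hω
    simp only [hg, Pi.zero_apply] at hω
    linarith [hω]
  rw [← measure_univ (μ := (ℙ : Measure Ω))]
  exact measure_congr (Filter.eventuallyEq_univ.2 hfinal)
end

section
/- A convex set D in ℝ^n contains the expectation of every integrable random vector almost surely contained in D; that is, if D is convex, P(X ∈ D) = 1 and E[X] exists, then E[X] ∈ D. The set D need not be closed. -/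
open MeasureTheory ProbabilityTheory

section Aux

open Module

variable {E : Type*} [NormedAddCommGroup E] [NormedSpace ℝ E]

/-- A point in the closure of a convex set with nonempty interior lies in the closure of the
interior. -/
private lemma mem_closure_interior_of_convex {s : Set E} (hs : Convex ℝ s) {a x : E}
    (ha : a ∈ interior s) (hx : x ∈ closure s) : x ∈ closure (interior s) := by
  have htend : Filter.Tendsto (fun m : ℕ => ((m : ℝ) + 1)⁻¹ • a + (1 - ((m : ℝ) + 1)⁻¹) • x)
      Filter.atTop (nhds x) := by
    have h0 : Filter.Tendsto (fun m : ℕ => ((m : ℝ) + 1)⁻¹) Filter.atTop (nhds 0) :=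
      tendsto_one_div_add_atTop_nhds_zero_nat.congr (by intro m; rw [one_div])
    have := (h0.smul_const a).add (((tendsto_const_nhds (x := (1:ℝ))).sub h0).smul_const x)
    simpa using this
  refine mem_closure_of_tendsto htend (Filter.Eventually.of_forall fun m => ?_)
  have hpos : (0:ℝ) < ((m : ℝ) + 1)⁻¹ := by positivity
  have hle : ((m : ℝ) + 1)⁻¹ ≤ 1 := by
    rw [inv_le_one_iff₀]; right; linarith [Nat.cast_nonneg (α := ℝ) m]
  exact hs.combo_interior_closure_mem_interior ha hx hpos (by linarith) (by ring)

universe u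

private theorem aux : ∀ (n : ℕ) (E : Type) [NormedAddCommGroup E] [InnerProductSpace ℝ E]
    [MeasurableSpace E] [BorelSpace E] [FiniteDimensional ℝ E], finrank ℝ E ≤ n →
    ∀ (Ω : Type u) [MeasurableSpace Ω] (μ : Measure Ω) [IsProbabilityMeasure μ]
    (D : Set E), Convex ℝ D → ∀ (X : Ω → E), Integrable X μ →
    μ {ω | X ω ∈ D} = 1 → (∫ ω, X ω ∂μ) ∈ D := by
  intro n
  induction n with
  | zero =>
    intro E _ _ _ _ _ hrank Ω _ μ _ D hD X hX h
    have hsub : Subsingleton E := by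
      rw [← finrank_zero_iff (R := ℝ)]; omega
    have hne : {ω | X ω ∈ D}.Nonempty := by
      rw [Set.nonempty_iff_ne_empty]
      intro hemp
      rw [hemp] at h; simp at h
    obtain ⟨ω₀, hω₀⟩ := hne
    rwa [Subsingleton.elim (∫ ω, X ω ∂μ) (X ω₀)]
  | succ n ih =>
    intro E _ _ _ _ _ hrank Ω _ μ _ D hD X hX h
    -- the key dimension-reduction step
    have key : ∀ (V : Submodule ℝ E), finrank ℝ ↥V ≤ n → ∀ p : E,
        (∀ᵐ ω ∂μ, X ω - p ∈ V) → (∫ ω, X ω ∂μ) ∈ D := by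
      intro V hVn p hae
      set Z : Ω → ↥V := fun ω => Submodule.orthogonalProjectionOnto V (X ω - p) with hZdef
      have hXp : Integrable (fun ω => X ω - p) μ := hX.sub (integrable_const p)
      have hZint : Integrable Z μ := (Submodule.orthogonalProjectionOnto V).integrable_comp hXp
      have hZeq : ∀ᵐ ω ∂μ, ((Z ω : E)) = X ω - p := by
        filter_upwards [hae] with ω hω
        simp only [hZdef]
        rw [show X ω - p = ((⟨X ω - p, hω⟩ : ↥V) : E) from rfl,
          Submodule.orthogonalProjectionOnto_mem_subspace_eq_self]
      set D' : Set ↥V := {y : ↥V | (y : E) + p ∈ D} with hD'def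
      have hD'conv : Convex ℝ D' := by
        intro y hy z hz a b ha hb hab
        have hcomb : ((a • y + b • z : ↥V) : E) + p
            = a • ((y : E) + p) + b • ((z : E) + p) := by
          push_cast
          rw [smul_add, smul_add]
          rw [show a • (y:E) + a • p + (b • (z:E) + b • p)
              = a • (y:E) + b • (z:E) + (a+b) • p by rw [add_smul]; abel, hab, one_smul]
        show ((a • y + b • z : ↥V) : E) + p ∈ D
        rw [hcomb]
        exact hD hy hz ha hb hab
      have hμ' : μ {ω | Z ω ∈ D'} = 1 := by
        refine le_antisymm prob_le_one ?_
        have hsub : {ω | X ω ∈ D} ∩ {ω | (Z ω : E) = X ω - p} ⊆ {ω | Z ω ∈ D'} := by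
          rintro ω ⟨h1, h2⟩
          show ((Z ω : E)) + p ∈ D
          rw [h2]; simpa using h1
        calc (1:ENNReal) = μ ({ω | X ω ∈ D} ∩ {ω | (Z ω : E) = X ω - p}) := by
              rw [measure_inter_conull]; · exact h.symm
              · simpa [ae_iff, Set.compl_setOf] using hZeq
          _ ≤ μ {ω | Z ω ∈ D'} := measure_mono hsub
      have hmem : (∫ ω, Z ω ∂μ) ∈ D' := ih ↥V hVn Ω μ D' hD'conv Z hZint hμ'
      have hint : ((∫ ω, Z ω ∂μ : ↥V) : E) = (∫ ω, X ω ∂μ) - p := by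
        have h1 : ∫ ω, ((Z ω : E)) ∂μ = ((∫ ω, Z ω ∂μ : ↥V) : E) :=
          (V.subtypeL.integral_comp_comm hZint)
        have h2 : ∫ ω, ((Z ω : E)) ∂μ = ∫ ω, (X ω - p) ∂μ := integral_congr_ae hZeq
        rw [← h1, h2, integral_sub hX (integrable_const p), integral_const]
        simp
      have := hmem
      rw [hD'def] at this
      simp only [Set.mem_setOf_eq, hint] at this
      simpa using this
    -- now the main argument
    by_cases hint : (interior D).Nonempty
    · -- interior nonempty
      have haeX : AEMeasurable X μ := hX.aemeasurable
      have haeclos : ∀ᵐ ω ∂μ, X ω ∈ closure D := by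
        refine (ae_iff_measure_eq ?_).2 ?_
        · exact haeX.nullMeasurable isClosed_closure.measurableSet
        · rw [measure_univ]
          refine le_antisymm prob_le_one ?_
          rw [← h]
          exact measure_mono fun ω hω => subset_closure hω
      have hmclos : (∫ ω, X ω ∂μ) ∈ closure D :=
        hD.closure.integral_mem isClosed_closure haeclos hX
      by_cases hm : (∫ ω, X ω ∂μ) ∈ D
      · exact hm
      exfalso
      set m := ∫ ω, X ω ∂μ with hmdef
      have hmint : m ∉ interior D := fun hmem => hm (interior_subset hmem)
      obtain ⟨f, hf⟩ := geometric_hahn_banach_open_point hD.interior isOpen_interior hmint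
      obtain ⟨a, ha⟩ := hint
      have hfne : f a < f m := hf a ha
      -- f x ≤ f m on closure D
      have hle : ∀ x ∈ closure D, f x ≤ f m := by
        intro x hx
        have hxc : x ∈ closure (interior D) := mem_closure_interior_of_convex hD ha hx
        have hcl : closure (interior D) ⊆ {y | f y ≤ f m} := by
          refine (isClosed_le f.continuous continuous_const).closure_subset_iff.2 ?_
          exact fun y hy => (hf y hy).le
        exact hcl hxc
      have haele : ∀ᵐ ω ∂μ, f (X ω) ≤ f m := by
        filter_upwards [haeclos] with ω hω using hle _ hω
      have hfint : Integrable (fun ω => f (X ω)) μ := f.integrable_comp hX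
      have hintf : ∫ ω, f (X ω) ∂μ = f m := f.integral_comp_comm hX
      have hg : (fun ω => f m - f (X ω)) =ᵐ[μ] 0 := by
        rw [← integral_eq_zero_iff_of_nonneg_ae]
        · rw [integral_sub (integrable_const _) hfint, hintf, integral_const]
          simp
        · filter_upwards [haele] with ω hω
          simpa using hω
        · exact (integrable_const _).sub hfint
      have haeker : ∀ᵐ ω ∂μ, X ω - m ∈ LinearMap.ker (f : E →ₗ[ℝ] ℝ) := by
        filter_upwards [hg] with ω hω
        have h0 : f m - f (X ω) = 0 := hω
        have hval : f (X ω - m) = 0 := by rw [map_sub]; linarith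
        simpa [LinearMap.mem_ker] using hval
      have hker : LinearMap.ker (f : E →ₗ[ℝ] ℝ) < ⊤ := by
        rw [lt_top_iff_ne_top]
        intro htop
        have h1 : f a = 0 := by
          have : a ∈ LinearMap.ker (f : E →ₗ[ℝ] ℝ) := htop ▸ Submodule.mem_top
          simpa using this
        have h2 : f m = 0 := by
          have : m ∈ LinearMap.ker (f : E →ₗ[ℝ] ℝ) := htop ▸ Submodule.mem_top
          simpa using this
        rw [h1, h2] at hfne; exact lt_irrefl _ hfne
      have hdim : finrank ℝ ↥(LinearMap.ker (f : E →ₗ[ℝ] ℝ)) ≤ n := by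
        have := Submodule.finrank_lt (K := ℝ) (V := E) hker.ne
        omega
      exact hm (key (LinearMap.ker (f : E →ₗ[ℝ] ℝ)) hdim m haeker)
    · -- interior empty
      have hne : D.Nonempty := by
        have : {ω | X ω ∈ D}.Nonempty := by
          rw [Set.nonempty_iff_ne_empty]
          intro hemp
          rw [hemp] at h; simp at h
        obtain ⟨ω₀, hω₀⟩ := this
        exact ⟨X ω₀, hω₀⟩
      obtain ⟨p, hp⟩ := hne
      have hspan : affineSpan ℝ D ≠ ⊤ := by
        intro htop
        rw [← hD.interior_nonempty_iff_affineSpan_eq_top] at htop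
        exact hint htop
      set V := (affineSpan ℝ D).direction with hVdef
      have hdir : ∀ x ∈ D, x - p ∈ V :=
        fun x hx => AffineSubspace.vsub_mem_direction (subset_affineSpan ℝ D hx)
          (subset_affineSpan ℝ D hp)
      have hVne : V ≠ ⊤ := by
        intro htop
        apply hspan
        rw [← AffineSubspace.direction_eq_top_iff_of_nonempty
          ⟨p, subset_affineSpan ℝ D hp⟩]
        exact htop
      have hdim : finrank ℝ ↥V ≤ n := by
        have := Submodule.finrank_lt (K := ℝ) (V := E) hVne
        omega
      have haeV : ∀ᵐ ω ∂μ, X ω - p ∈ V := by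
        have haeXp : AEMeasurable (fun ω => X ω - p) μ :=
          hX.aemeasurable.sub aemeasurable_const
        refine (ae_iff_measure_eq ?_).2 ?_
        · exact haeXp.nullMeasurable (V.closed_of_finiteDimensional).measurableSet
        · rw [measure_univ]
          refine le_antisymm prob_le_one ?_
          rw [← h]
          exact measure_mono fun ω hω => hdir _ hω
      exact key V hdim p haeV

end Aux

theorem expectation_mem_of_convex {Ω : Type*} [MeasureSpace Ω]
    [IsProbabilityMeasure (ℙ : Measure Ω)] {n : ℕ}
    (D : Set (EuclideanSpace ℝ (Fin n))) (hDconv : Convex ℝ D)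
    (X : Ω → EuclideanSpace ℝ (Fin n)) (hX : Integrable X)
    (h : ℙ {ω | X ω ∈ D} = 1) :
    (∫ ω, X ω) ∈ D :=
  aux (Module.finrank ℝ (EuclideanSpace ℝ (Fin n))) (EuclideanSpace ℝ (Fin n)) le_rfl
    Ω ℙ D hDconv X hX h
end

section
/- Let Z be an integrable random vector and Y a positive integrable scalar random variable such that Z/Y and E[Z]/E[Y] both lie in a convex set D, and let g be a convex function on D. Then E[Y · g(Z/Y)] ≥ E[Y] · g(E[Z]/E[Y]). -/
open MeasureTheory ProbabilityTheory Set

open scoped Topology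

/-- Barycenter of an integrable function taking values a.e. in a convex subset of a
finite-dimensional real normed space lies in that set (no closedness needed). -/
lemma barycenter_mem_convex :
    ∀ (n : ℕ) (E : Type) [NormedAddCommGroup E] [NormedSpace ℝ E],
    ∀ [FiniteDimensional ℝ E], Module.finrank ℝ E ≤ n →
    ∀ {Ω : Type*} [MeasureSpace Ω] [IsProbabilityMeasure (ℙ : Measure Ω)]
      (f : Ω → E) (s : Set E), Convex ℝ s → Integrable f →
      (∀ᵐ ω, f ω ∈ s) → (∫ ω, f ω) ∈ s := by
  intro n
  induction n with
  | zero =>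
      intro E _ _ _ hrank Ω _ _ f s hs hf hae
      have h0 : Module.finrank ℝ E = 0 := Nat.le_zero.mp hrank
      have : Subsingleton E := Module.finrank_zero_iff.mp h0
      haveI : (MeasureTheory.ae (ℙ : Measure Ω)).NeBot :=
        ae_neBot.mpr (IsProbabilityMeasure.ne_zero _)
      obtain ⟨ω, hω⟩ := hae.exists
      have h1 : (∫ ω, f ω) = f ω := Subsingleton.elim _ _
      rwa [h1]
  | succ n ih =>
      intro E _ _ _ hrank Ω _ _ f s hs hf hae
      haveI : (MeasureTheory.ae (ℙ : Measure Ω)).NeBot :=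
        ae_neBot.mpr (IsProbabilityMeasure.ne_zero _)
      by_cases hb : (∫ ω, f ω) ∈ s
      · exact hb
      have key : ∃ s₂ : Set E, Convex ℝ s₂ ∧ s₂ ⊆ s ∧ (∀ᵐ ω, f ω ∈ s₂) ∧
          Module.finrank ℝ (vectorSpan ℝ s₂) ≤ n := by
        by_cases hio : (interior s).Nonempty
        · -- the barycenter is on the frontier: separate
          set b := ∫ ω, f ω with hbdef
          obtain ⟨y, hy⟩ := hio
          have hbs : b ∉ interior s := fun h => hb (interior_subset h)
          obtain ⟨φ, hφ⟩ := geometric_hahn_banach_open_point hs.interior isOpen_interior hbs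
          have hle : ∀ x ∈ s, φ x ≤ φ b := by
            intro x hx
            have hc : Continuous fun t : ℝ => φ ((1 - t) • x + t • y) := by fun_prop
            have htend : Filter.Tendsto (fun t : ℝ => φ ((1 - t) • x + t • y))
                (𝓝[>] (0:ℝ)) (𝓝 (φ x)) := by
              have h0 : φ ((1 - (0:ℝ)) • x + (0:ℝ) • y) = φ x := by norm_num
              simpa [h0] using (hc.tendsto 0).mono_left nhdsWithin_le_nhds
            refine le_of_tendsto htend ?_
            filter_upwards [Ioc_mem_nhdsGT_of_mem (Set.left_mem_Ico.mpr one_pos)] with t ht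
            exact (hφ _ (hs.combo_closure_interior_mem_interior (subset_closure hx) hy
              (by linarith [ht.2]) ht.1 (by ring))).le
          have haeb : ∀ᵐ ω, φ (f ω) = φ b := by
            have h1 : 0 ≤ᵐ[(ℙ : Measure Ω)] fun ω => φ b - φ (f ω) :=
              hae.mono fun ω h => sub_nonneg.2 (hle _ h)
            have h2 : Integrable (fun ω => φ b - φ (f ω)) :=
              (integrable_const _).sub (φ.integrable_comp hf)
            have h3 : ∫ ω, (φ b - φ (f ω)) = 0 := by
              rw [integral_sub (integrable_const _) (φ.integrable_comp hf),
                integral_const, probReal_univ, one_smul,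
                φ.integral_comp_comm hf, sub_self]
            have h4 := (integral_eq_zero_iff_of_nonneg_ae h1 h2).mp h3
            filter_upwards [h4] with ω hω
            have : φ b - φ (f ω) = 0 := hω
            linarith
          refine ⟨s ∩ {x | φ x = φ b}, hs.inter ?_, inter_subset_left, ?_, ?_⟩
          · exact convex_hyperplane (φ.toLinearMap.isLinear) (φ b)
          · filter_upwards [hae, haeb] with ω h1 h2; exact ⟨h1, h2⟩
          · have hsub : vectorSpan ℝ (s ∩ {x | φ x = φ b}) ≤ LinearMap.ker (φ : E →ₗ[ℝ] ℝ) := by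
              rw [vectorSpan_def]
              refine Submodule.span_le.mpr ?_
              rintro v ⟨x, hx, z, hz, rfl⟩
              have : φ (x -ᵥ z) = 0 := by
                simp only [vsub_eq_sub, map_sub]
                rw [hx.2, hz.2, sub_self]
              exact this
            have hker_ne : LinearMap.ker (φ : E →ₗ[ℝ] ℝ) ≠ ⊤ := by
              intro h
              have : b - y ∈ LinearMap.ker (φ : E →ₗ[ℝ] ℝ) := h ▸ Submodule.mem_top
              have h0 : φ (b - y) = 0 := LinearMap.mem_ker.mp this
              have := hφ y hy
              rw [map_sub] at h0
              linarith
            have h5 : Module.finrank ℝ (vectorSpan ℝ (s ∩ {x | φ x = φ b})) ≤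
                Module.finrank ℝ (LinearMap.ker (φ : E →ₗ[ℝ] ℝ)) :=
              Submodule.finrank_mono hsub
            have h6 := Submodule.finrank_lt (K := ℝ) (V := E)
              hker_ne
            omega
        · -- empty interior: the whole set lies in a proper affine subspace
          refine ⟨s, hs, subset_rfl, hae, ?_⟩
          have hsne : s.Nonempty := by
            obtain ⟨ω, hω⟩ := hae.exists; exact ⟨f ω, hω⟩
          have htop : affineSpan ℝ s ≠ ⊤ := by
            intro h
            exact hio (hs.interior_nonempty_iff_affineSpan_eq_top.mpr h)
          have hv : vectorSpan ℝ s ≠ ⊤ := fun h =>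
            htop ((AffineSubspace.affineSpan_eq_top_iff_vectorSpan_eq_top_of_nonempty ℝ E E hsne).mpr h)
          have h6 := Submodule.finrank_lt (K := ℝ) (V := E) hv
          omega
      obtain ⟨s₂, hs₂, hsub₂, hae₂, hrank₂⟩ := key
      obtain ⟨ω₀, hω₀⟩ := hae₂.exists
      set c := f ω₀ with hcdef
      set W := vectorSpan ℝ s₂ with hWdef
      have hWclosed : IsClosed (W : Set E) := W.closed_of_finiteDimensional
      obtain ⟨π, hπ⟩ := Submodule.ClosedComplemented.of_finiteDimensional W
      have hdiff : ∀ x ∈ s₂, x - c ∈ W := fun x hx => by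
        simpa [vsub_eq_sub] using vsub_mem_vectorSpan ℝ hx hω₀
      set s' : Set W := {w : W | (w : E) + c ∈ s₂} with hs'def
      have hs' : Convex ℝ s' := by
        intro w₁ hw₁ w₂ hw₂ a b ha hb' hab
        have hEq : ((a • w₁ + b • w₂ : W) : E) + c
            = a • ((w₁ : E) + c) + b • ((w₂ : E) + c) := by
          push_cast
          match_scalars <;> linarith
        show ((a • w₁ + b • w₂ : W) : E) + c ∈ s₂
        rw [hEq]
        exact hs₂ hw₁ hw₂ ha hb' hab
      have hgint : Integrable (fun ω => π (f ω - c)) :=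
        π.integrable_comp (hf.sub (integrable_const c))
      have hae' : ∀ᵐ ω, π (f ω - c) ∈ s' := by
        filter_upwards [hae₂] with ω hω
        have hm : f ω - c ∈ W := hdiff _ hω
        have hval : π (f ω - c) = ⟨f ω - c, hm⟩ := hπ ⟨f ω - c, hm⟩
        show ((π (f ω - c) : W) : E) + c ∈ s₂
        rw [hval]
        simpa using hω
      have hres := ih W (by omega) (fun ω => π (f ω - c)) s' hs' hgint hae'
      have hbc : (∫ ω, f ω) - c ∈ W := by
        have hcl : (∫ ω, f ω) ∈ closure s₂ :=
          hs₂.closure.integral_mem isClosed_closure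
            (hae₂.mono fun ω h => subset_closure h) hf
        have hsubc : closure s₂ ⊆ {x | x - c ∈ W} :=
          closure_minimal (fun x hx => hdiff x hx)
            (hWclosed.preimage (continuous_id.sub continuous_const))
        exact hsubc hcl
      have hπint : ∫ ω, π (f ω - c) = π ((∫ ω, f ω) - c) := by
        have h := π.integral_comp_comm (hf.sub (integrable_const c))
        simp only [Pi.sub_apply] at h
        rw [h, integral_sub hf (integrable_const c), integral_const, probReal_univ,
          one_smul]
      rw [hπint, hπ ⟨(∫ ω, f ω) - c, hbc⟩] at hres
      have : ((⟨(∫ ω, f ω) - c, hbc⟩ : W) : E) + c ∈ s₂ := hres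
      simpa using hsub₂ (by simpa using this)

theorem generalized_jensen_pos {Ω : Type*} [MeasureSpace Ω]
    [IsProbabilityMeasure (ℙ : Measure Ω)] {d : ℕ}
    {D : Set (Fin d → ℝ)} (hD : Convex ℝ D)
    (g : (Fin d → ℝ) → ℝ) (hg : ConvexOn ℝ D g)
    (Y : Ω → ℝ) (Z : Ω → Fin d → ℝ)
    (hY : Integrable Y) (hZ : Integrable Z)
    (hYpos : ∀ᵐ ω, 0 < Y ω)
    (hmem : ∀ᵐ ω, (Y ω)⁻¹ • Z ω ∈ D)
    (hmem' : (∫ ω, Y ω)⁻¹ • (∫ ω, Z ω) ∈ D)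
    (hint : Integrable (fun ω => Y ω * g ((Y ω)⁻¹ • Z ω))) :
    (∫ ω, Y ω) * g ((∫ ω, Y ω)⁻¹ • (∫ ω, Z ω)) ≤
      ∫ ω, Y ω * g ((Y ω)⁻¹ • Z ω) := by
  classical
  set K : Set (ℝ × (Fin d → ℝ) × ℝ) :=
    {p | 0 < p.1 ∧ p.1⁻¹ • p.2.1 ∈ D ∧ p.1 * g (p.1⁻¹ • p.2.1) ≤ p.2.2} with hK
  have hKconv : Convex ℝ K := by
    rintro ⟨y₁, z₁, t₁⟩ ⟨hy₁, hd₁, ht₁⟩ ⟨y₂, z₂, t₂⟩ ⟨hy₂, hd₂, ht₂⟩ a b ha hb hab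
    simp only [Prod.smul_mk, Prod.mk_add_mk, smul_eq_mul, hK, Set.mem_setOf_eq] at *
    have hy : 0 < a * y₁ + b * y₂ := by
      rcases eq_or_lt_of_le ha with h|h
      · have hb1 : b = 1 := by linarith
        rw [← h, hb1]; simpa using hy₂
      · exact add_pos_of_pos_of_nonneg (mul_pos h hy₁) (mul_nonneg hb hy₂.le)
    set lam := a * y₁ / (a * y₁ + b * y₂) with hlamdef
    set mu := b * y₂ / (a * y₁ + b * y₂) with hmudef
    have hlam : 0 ≤ lam := div_nonneg (mul_nonneg ha hy₁.le) hy.le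
    have hmu : 0 ≤ mu := div_nonneg (mul_nonneg hb hy₂.le) hy.le
    have hsum : lam + mu = 1 := by
      rw [hlamdef, hmudef]
      field_simp
    have hvec : (a * y₁ + b * y₂)⁻¹ • (a • z₁ + b • z₂)
        = lam • (y₁⁻¹ • z₁) + mu • (y₂⁻¹ • z₂) := by
      rw [hlamdef, hmudef]
      match_scalars <;> (field_simp; try ring)
    have hDm : (a * y₁ + b * y₂)⁻¹ • (a • z₁ + b • z₂) ∈ D := by
      rw [hvec]; exact hD hd₁ hd₂ hlam hmu hsum
    refine ⟨hy, hDm, ?_⟩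
    have hgle : g ((a * y₁ + b * y₂)⁻¹ • (a • z₁ + b • z₂))
        ≤ lam * g (y₁⁻¹ • z₁) + mu * g (y₂⁻¹ • z₂) := by
      rw [hvec]
      simpa using hg.2 hd₁ hd₂ hlam hmu hsum
    have h1 : (a * y₁ + b * y₂) * (lam * g (y₁⁻¹ • z₁) + mu * g (y₂⁻¹ • z₂))
        = a * (y₁ * g (y₁⁻¹ • z₁)) + b * (y₂ * g (y₂⁻¹ • z₂)) := by
      rw [hlamdef, hmudef]
      field_simp
    calc (a * y₁ + b * y₂) * g ((a * y₁ + b * y₂)⁻¹ • (a • z₁ + b • z₂))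
        ≤ (a * y₁ + b * y₂) * (lam * g (y₁⁻¹ • z₁) + mu * g (y₂⁻¹ • z₂)) :=
          mul_le_mul_of_nonneg_left hgle hy.le
      _ = a * (y₁ * g (y₁⁻¹ • z₁)) + b * (y₂ * g (y₂⁻¹ • z₂)) := h1
      _ ≤ a * t₁ + b * t₂ :=
          add_le_add (mul_le_mul_of_nonneg_left ht₁ ha) (mul_le_mul_of_nonneg_left ht₂ hb)
  have hFint : Integrable (fun ω => (Y ω, (Z ω, Y ω * g ((Y ω)⁻¹ • Z ω)))) :=
    hY.prodMk (hZ.prodMk hint)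
  have haeK : ∀ᵐ ω, (Y ω, (Z ω, Y ω * g ((Y ω)⁻¹ • Z ω))) ∈ K := by
    filter_upwards [hYpos, hmem] with ω h1 h2
    exact ⟨h1, h2, le_rfl⟩
  have hres := barycenter_mem_convex (Module.finrank ℝ (ℝ × (Fin d → ℝ) × ℝ))
    (ℝ × (Fin d → ℝ) × ℝ) le_rfl _ K hKconv hFint haeK
  rw [integral_pair hY (hZ.prodMk hint), integral_pair hZ hint] at hres
  exact hres.2.2
end

section
/- Let Z be an integrable random vector and Y a negative integrable scalar random variable such that Z/Y and E[Z]/E[Y] both lie in a convex set D, and let g be a convex function on D. Then E[Y · g(Z/Y)] ≤ E[Y] · g(E[Z]/E[Y]). -/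
open Set MeasureTheory ProbabilityTheory
open scoped ENNReal NNReal

section Subgradient

variable {E : Type*} [NormedAddCommGroup E] [NormedSpace ℝ E] [FiniteDimensional ℝ E]

open Set

variable {E : Type*} [NormedAddCommGroup E] [NormedSpace ℝ E] [FiniteDimensional ℝ E]

/-- Supporting affine functional at an interior point of the domain of a convex function. -/
lemma exists_subgradient_of_mem_interior {D : Set E} {g : E → ℝ}
    (hD : Convex ℝ D) (hg : ConvexOn ℝ D g) {b : E} (hb : b ∈ interior D) :
    ∃ ψ : E →L[ℝ] ℝ, ∀ x ∈ D, g b + (ψ x - ψ b) ≤ g x := by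
  -- the open strict epigraph over the interior of D
  set U : Set (E × ℝ) := (interior D ×ˢ (univ : Set ℝ)) ∩
    {p : E × ℝ | g p.1 - p.2 < 0} with hU
  have hUopen : IsOpen U := by
    have hcont : ContinuousOn (fun p : E × ℝ => g p.1 - p.2)
        (interior D ×ˢ (univ : Set ℝ)) := by
      apply ContinuousOn.sub
      · exact hg.continuousOn_interior.comp continuous_fst.continuousOn
          (fun p hp => hp.1)
      · exact continuous_snd.continuousOn
    have := hcont.isOpen_inter_preimage
      (isOpen_interior.prod isOpen_univ) isOpen_Iio (t := Iio (0:ℝ))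
    simpa [hU, preimage, Iio] using this
  have hUconv : Convex ℝ U := by
    rintro ⟨x, s⟩ ⟨⟨hx, -⟩, hxs⟩ ⟨y, t⟩ ⟨⟨hy, -⟩, hyt⟩ a c ha hc hac
    simp only [mem_setOf_eq, sub_neg] at hxs hyt
    refine ⟨⟨hD.interior hx hy ha hc hac, trivial⟩, ?_⟩
    simp only [hU, mem_setOf_eq, Prod.fst, Prod.snd, sub_neg, Prod.smul_mk, Prod.mk_add_mk,
      smul_eq_mul]
    calc g (a • x + c • y) ≤ a * g x + c * g y :=
          hg.2 (interior_subset hx) (interior_subset hy) ha hc hac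
      _ < a * s + c * t := by
          rcases eq_or_lt_of_le ha with rfl | ha'
          · have hc' : c = 1 := by linarith
            simpa [hc'] using hyt
          · rcases eq_or_lt_of_le hc with rfl | hc'
            · have ha1 : a = 1 := by linarith
              simpa [ha1] using hxs
            · have h1 : a * g x < a * s := by exact (mul_lt_mul_iff_right₀ ha').2 hxs
              have h2 : c * g y < c * t := by exact (mul_lt_mul_iff_right₀ hc').2 hyt
              linarith
  have hbU : ((b, g b) : E × ℝ) ∉ U := by
    rintro ⟨-, h⟩
    simp only [mem_setOf_eq] at h
    linarith
  obtain ⟨φ, hφ⟩ := geometric_hahn_banach_open_point hUconv hUopen hbU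
  set ψ : E →L[ℝ] ℝ := φ.comp (ContinuousLinearMap.inl ℝ E ℝ) with hψ
  set c : ℝ := φ (0, 1) with hc
  have hsplit : ∀ (x : E) (t : ℝ), φ (x, t) = ψ x + t * c := by
    intro x t
    have : ((x, t) : E × ℝ) = (x, (0:ℝ)) + t • ((0:E), (1:ℝ)) := by
      simp [Prod.ext_iff]
    rw [this, map_add, _root_.map_smul]
    simp [hψ, hc, ContinuousLinearMap.inl_apply, smul_eq_mul, mul_comm]
  have hmemU : ∀ x ∈ interior D, ∀ t, g x < t → (x, t) ∈ U := by
    intro x hx t ht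
    exact ⟨⟨hx, trivial⟩, by simpa [sub_neg] using ht⟩
  have hcneg : c < 0 := by
    have h1 := hφ _ (hmemU b hb (g b + 1) (by linarith))
    rw [hsplit, hsplit] at h1
    linarith [h1]
  -- key inequality on the interior
  have hint : ∀ x ∈ interior D, ψ x + c * g x ≤ ψ b + c * g b := by
    intro x hx
    by_contra h
    push_neg at h
    set ε : ℝ := (ψ x + c * g x - (ψ b + c * g b)) / (-c) with hε
    have hεpos : 0 < ε := div_pos (by linarith) (by linarith)
    have h1 := hφ _ (hmemU x hx (g x + ε) (by linarith))
    rw [hsplit, hsplit] at h1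
    have hA : ε * (-c) = ψ x + c * g x - (ψ b + c * g b) :=
      div_mul_cancel₀ _ (by linarith : (-c:ℝ) ≠ 0)
    have hεc : ε * c = -(ψ x + c * g x - (ψ b + c * g b)) := by
      linear_combination -hA
    rw [add_mul] at h1
    nlinarith [h1, hεc]
  -- extend to all of D by a midpoint argument
  have hD' : ∀ x ∈ D, ψ x + c * g x ≤ ψ b + c * g b := by
    intro x hx
    have hm : (1/2 : ℝ) • b + (1/2 : ℝ) • x ∈ interior D :=
      hD.combo_interior_self_mem_interior hb hx (by norm_num) (by norm_num) (by norm_num)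
    have h1 := hint _ hm
    have h2 : g ((1/2 : ℝ) • b + (1/2 : ℝ) • x) ≤ (1/2) * g b + (1/2) * g x :=
      hg.2 (interior_subset hb) hx (by norm_num) (by norm_num) (by norm_num)
    have h3 : ψ ((1/2 : ℝ) • b + (1/2 : ℝ) • x) = (1/2) * ψ b + (1/2) * ψ x := by
      simp only [map_add, _root_.map_smul, smul_eq_mul]
    nlinarith [h1, h2, h3]
  refine ⟨(-c)⁻¹ • ψ, fun x hx => ?_⟩
  have h1 := hD' x hx
  have hc0 : (0:ℝ) < -c := by linarith
  simp only [ContinuousLinearMap.smul_apply, smul_eq_mul]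
  have h3 : (ψ x - ψ b) / (-c) ≤ g x - g b := (div_le_iff₀ hc0).2 (by nlinarith)
  have h4 : (ψ x - ψ b) / (-c) = (-c)⁻¹ * ψ x - (-c)⁻¹ * ψ b := by ring
  linarith

end Subgradient

/-- General Jensen inequality in finite dimensions, no topological assumptions on `D` or `g`. -/
lemma jensen_aux : ∀ (n : ℕ) (E : Type) [NormedAddCommGroup E] [NormedSpace ℝ E]
    [FiniteDimensional ℝ E], Module.finrank ℝ E ≤ n →
    ∀ {Ω : Type*} [MeasurableSpace Ω] (μ : Measure Ω) [IsProbabilityMeasure μ]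
    (D : Set E) (hD : Convex ℝ D) (g : E → ℝ) (hg : ConvexOn ℝ D g)
    (f : Ω → E) (hf : Integrable f μ) (hfD : ∀ᵐ ω ∂μ, f ω ∈ D)
    (hgf : Integrable (fun ω => g (f ω)) μ)
    (hbD : (∫ ω, f ω ∂μ) ∈ D),
    g (∫ ω, f ω ∂μ) ≤ ∫ ω, g (f ω) ∂μ := by
  intro n
  induction n using Nat.strong_induction_on with
  | _ n IH =>
    intro E _ _ _ hrank Ω _ μ _ D hD g hg f hf hfD hgf hbD
    set b : E := ∫ ω, f ω ∂μ with hb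
    by_cases hbi : b ∈ interior D
    · -- interior case: supporting hyperplane
      obtain ⟨ψ, hψ⟩ := exists_subgradient_of_mem_interior hD hg hbi
      have hle : ∀ᵐ ω ∂μ, g b + (ψ (f ω) - ψ b) ≤ g (f ω) :=
        hfD.mono fun ω hω => hψ _ hω
      have hint1 : Integrable (fun ω => g b + (ψ (f ω) - ψ b)) μ :=
        (integrable_const _).add ((ψ.integrable_comp hf).sub (integrable_const _))
      have := integral_mono_ae hint1 hgf hle
      have hcalc : ∫ ω, (g b + (ψ (f ω) - ψ b)) ∂μ = g b := by
        have h1 : (fun ω => g b + (ψ (f ω) - ψ b)) = fun ω => (g b - ψ b) + ψ (f ω) := by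
          funext ω; ring
        rw [h1, integral_add (integrable_const _) (ψ.integrable_comp hf),
          ψ.integral_comp_comm hf, integral_const]
        simp [← hb, measure_univ]
      rw [hcalc] at this
      exact this
    · -- boundary / degenerate case : find a supporting functional ℓ
      have hbD' : b ∈ D := hbD
      obtain ⟨ℓ, hℓne, hℓle⟩ : ∃ ℓ : E →L[ℝ] ℝ, (∃ v, ℓ v ≠ 0) ∧ ∀ x ∈ D, ℓ x ≤ ℓ b := by
        by_cases hDi : (interior D).Nonempty
        · obtain ⟨φ, hφ⟩ := geometric_hahn_banach_open_point hD.interior isOpen_interior hbi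
          obtain ⟨y₀, hy₀⟩ := hDi
          refine ⟨φ, ⟨y₀ - b, fun h => (hφ y₀ hy₀).ne
            (by rwa [map_sub, sub_eq_zero] at h)⟩, fun x hx => ?_⟩
          -- pass to the closure of the interior
          have htend : Filter.Tendsto (fun t : ℝ => φ (t • y₀ + (1 - t) • x))
              (nhdsWithin 0 (Ioi 0)) (nhds (φ x)) := by
            have hcont : Continuous fun t : ℝ => φ (t • y₀ + (1 - t) • x) := by
              fun_prop
            have := hcont.tendsto 0
            simp only [zero_smul, sub_zero, one_smul, zero_add] at this
            exact this.mono_left nhdsWithin_le_nhds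
          refine le_of_tendsto htend ?_
          filter_upwards [Ioo_mem_nhdsGT_of_mem (by norm_num : (0:ℝ) ∈ Ico (0:ℝ) 1)]
            with t ht
          exact (hφ _ (hD.combo_interior_closure_mem_interior hy₀ (subset_closure hx)
            ht.1 (by linarith [ht.2]) (by ring))).le
        · -- empty interior: D lies in a proper affine subspace
          have hspan : affineSpan ℝ D ≠ ⊤ := by
            intro h
            exact hDi (hD.interior_nonempty_iff_affineSpan_eq_top.2 h)
          have hvs : vectorSpan ℝ D < ⊤ := by
            rcases (le_top : vectorSpan ℝ D ≤ ⊤).lt_or_eq with h | h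
            · exact h
            · exfalso
              apply hspan
              rw [eq_top_iff]
              intro z _
              have : z - b ∈ (affineSpan ℝ D).direction := by
                rw [direction_affineSpan, h]; trivial
              have := AffineSubspace.vadd_mem_of_mem_direction this
                (mem_affineSpan ℝ hbD')
              simpa [vsub_eq_sub, vadd_eq_add, sub_add_cancel] using this
          obtain ⟨ℓ₀, hℓ₀ne, hℓ₀bot⟩ :=
            Submodule.exists_dual_map_eq_bot_of_lt_top hvs inferInstance
          refine ⟨LinearMap.toContinuousLinearMap ℓ₀, ?_, fun x hx => ?_⟩
          · rcases DFunLike.ne_iff.1 hℓ₀ne with ⟨v, hv⟩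
            exact ⟨v, by simpa using hv⟩
          · have hmem : x - b ∈ vectorSpan ℝ D := by
              simpa [vsub_eq_sub] using vsub_mem_vectorSpan ℝ hx hbD'
            have : ℓ₀ (x - b) = 0 := by
              have : ℓ₀ (x - b) ∈ Submodule.map ℓ₀ (vectorSpan ℝ D) :=
                Submodule.mem_map_of_mem hmem
              rw [hℓ₀bot] at this
              simpa using this
            simp only [LinearMap.coe_toContinuousLinearMap']
            have := this
            rw [map_sub] at this
            linarith
      -- the function ℓ ∘ f is a.e. equal to ℓ b
      have hℓf : Integrable (fun ω => ℓ (f ω)) μ := ℓ.integrable_comp hf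
      have hℓint : ∫ ω, ℓ (f ω) ∂μ = ℓ b := ℓ.integral_comp_comm hf
      have heq : ∀ᵐ ω ∂μ, ℓ (f ω) = ℓ b := by
        have hnn : 0 ≤ᵐ[μ] fun ω => ℓ b - ℓ (f ω) :=
          hfD.mono fun ω hω => by simpa using hℓle _ hω
        have hi : Integrable (fun ω => ℓ b - ℓ (f ω)) μ := (integrable_const _).sub hℓf
        have hz : ∫ ω, (ℓ b - ℓ (f ω)) ∂μ = 0 := by
          rw [integral_sub (integrable_const _) hℓf, hℓint, integral_const]
          simp
        have := (integral_eq_zero_iff_of_nonneg_ae hnn hi).1 hz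
        filter_upwards [this] with ω hω
        have : ℓ b - ℓ (f ω) = 0 := hω
        linarith
      -- reduce to the kernel of ℓ
      set W : Submodule ℝ E := LinearMap.ker (ℓ : E →ₗ[ℝ] ℝ) with hW
      have hWlt : W < ⊤ := by
        rcases hℓne with ⟨v, hv⟩
        exact lt_top_iff_ne_top.2 fun h => hv (by
          have : v ∈ W := h ▸ Submodule.mem_top
          simpa [hW, LinearMap.mem_ker] using this)
      have hWrank : Module.finrank ℝ W < n :=
        lt_of_lt_of_le (Submodule.finrank_lt hWlt.ne) hrank
      obtain ⟨q, hq⟩ := Submodule.exists_isCompl W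
      set P : E →L[ℝ] W := LinearMap.toContinuousLinearMap (W.projectionOnto q hq) with hP
      set f' : Ω → W := fun ω => P (f ω - b) with hf'
      set D' : Set W := {w : W | (w : E) + b ∈ D} with hD'
      set g' : W → ℝ := fun w => g ((w : E) + b) with hg'
      have hae : ∀ᵐ ω ∂μ, ((f' ω : E) = f ω - b ∧ f' ω ∈ D') := by
        filter_upwards [heq, hfD] with ω h1 h2
        have hmem : f ω - b ∈ W := by
          simp [hW, LinearMap.mem_ker, map_sub, h1]
        have hcoe : (f' ω : E) = f ω - b := by
          show ((P (f ω - b) : W) : E) = f ω - b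
          have : P (f ω - b) = ⟨f ω - b, hmem⟩ := by
            simpa [hP] using Submodule.linearProjOfIsCompl_apply_left hq ⟨f ω - b, hmem⟩
          rw [this]
        refine ⟨hcoe, ?_⟩
        simp only [hD', mem_setOf_eq, hcoe, sub_add_cancel]
        exact h2
      have hf'int : Integrable f' μ := P.integrable_comp (hf.sub (integrable_const _))
      have hf'zero : ∫ ω, f' ω ∂μ = 0 := by
        have h0 : ∫ ω, (f ω - b) ∂μ = 0 := by
          rw [integral_sub hf (integrable_const _), integral_const]
          simp [← hb, measure_univ]
        calc ∫ ω, f' ω ∂μ = P (∫ ω, (f ω - b) ∂μ) :=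
              P.integral_comp_comm (hf.sub (integrable_const _))
          _ = 0 := by rw [h0, map_zero]
      have hkey : ∀ (w1 w2 : W) (a c : ℝ), a + c = 1 →
          ((a • w1 + c • w2 : W) : E) + b = a • ((w1 : E) + b) + c • ((w2 : E) + b) := by
        intro w1 w2 a c hac
        have h1 : a • ((w1:E) + b) + c • ((w2:E) + b)
            = (a • (w1:E) + c • (w2:E)) + (a + c) • b := by module
        push_cast
        rw [h1, hac, one_smul]
      have hD'conv : Convex ℝ D' := by
        intro w1 h1 w2 h2 a c ha hc hac
        simp only [hD', mem_setOf_eq] at h1 h2 ⊢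
        rw [hkey w1 w2 a c hac]
        exact hD h1 h2 ha hc hac
      have hg'conv : ConvexOn ℝ D' g' := by
        refine ⟨hD'conv, fun w1 h1 w2 h2 a c ha hc hac => ?_⟩
        simp only [hD', mem_setOf_eq] at h1 h2
        simp only [hg', smul_eq_mul]
        rw [hkey w1 w2 a c hac]
        exact hg.2 h1 h2 ha hc hac
      have hgfae : (fun ω => g' (f' ω)) =ᵐ[μ] fun ω => g (f ω) := by
        filter_upwards [hae] with ω h
        simp only [hg', h.1, sub_add_cancel]
      have hg'f' : Integrable (fun ω => g' (f' ω)) μ := (integrable_congr hgfae).2 hgf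
      have hf'D' : ∀ᵐ ω ∂μ, f' ω ∈ D' := hae.mono fun ω h => h.2
      have hbD'' : (∫ ω, f' ω ∂μ) ∈ D' := by
        rw [hf'zero]
        simp only [hD', mem_setOf_eq, Submodule.coe_zero, zero_add]
        exact hbD'
      have hIH := IH (Module.finrank ℝ W) hWrank W le_rfl μ D' hD'conv g' hg'conv
        f' hf'int hf'D' hg'f' hbD''
      have hzero : g' (∫ ω, f' ω ∂μ) = g b := by
        rw [hf'zero]
        simp [hg']
      rw [hzero, integral_congr_ae hgfae] at hIH
      exact hIH

theorem generalized_jensen_neg {Ω : Type*} [MeasureSpace Ω]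
    [IsProbabilityMeasure (ℙ : Measure Ω)] {d : ℕ}
    {D : Set (Fin d → ℝ)} (hD : Convex ℝ D)
    (g : (Fin d → ℝ) → ℝ) (hg : ConvexOn ℝ D g)
    (Y : Ω → ℝ) (Z : Ω → Fin d → ℝ)
    (hY : Integrable Y) (hZ : Integrable Z)
    (hYneg : ∀ᵐ ω, Y ω < 0)
    (hmem : ∀ᵐ ω, (Y ω)⁻¹ • Z ω ∈ D)
    (hmem' : (∫ ω, Y ω)⁻¹ • (∫ ω, Z ω) ∈ D)
    (hint : Integrable (fun ω => Y ω * g ((Y ω)⁻¹ • Z ω))) :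
    ∫ ω, Y ω * g ((Y ω)⁻¹ • Z ω) ≤
      (∫ ω, Y ω) * g ((∫ ω, Y ω)⁻¹ • (∫ ω, Z ω)) := by
  set c : ℝ := ∫ ω, Y ω with hcdef
  -- the mean of Y is negative
  have hc : c < 0 := by
    have hnn : 0 ≤ᵐ[(ℙ : Measure Ω)] fun ω => -Y ω :=
      hYneg.mono fun ω h => by simp only [Pi.zero_apply]; linarith
    have hsupp : ∀ᵐ ω, ω ∈ Function.support (fun ω => -Y ω) :=
      hYneg.mono fun ω h => by
        simp only [Function.mem_support, ne_eq, neg_eq_zero]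
        linarith
    have h0 : ℙ (Function.support (fun ω => -Y ω))ᶜ = 0 := by
      have := MeasureTheory.ae_iff.1 hsupp
      simpa [Set.compl_def] using this
    have hpos : 0 < ℙ (Function.support fun ω => -Y ω) := by
      by_contra h
      push_neg at h
      have h1 : ℙ (Function.support fun ω => -Y ω) = 0 := le_zero_iff.1 h
      have h2 := measure_union_le (μ := (ℙ : Measure Ω))
        (Function.support fun ω => -Y ω) (Function.support fun ω => -Y ω)ᶜ
      rw [Set.union_compl_self, h1, h0] at h2
      simp at h2
    have := (integral_pos_iff_support_of_nonneg_ae hnn hY.neg).2 hpos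
    rw [integral_neg] at this
    rw [hcdef]
    linarith
  have hcne : c ≠ 0 := hc.ne
  -- change of measure: density Y/c
  set ρ : Ω → ℝ≥0 := fun ω => (Y ω / c).toNNReal with hρdef
  have hρ : AEMeasurable ρ ℙ :=
    measurable_real_toNNReal.comp_aemeasurable (hY.aemeasurable.div_const c)
  set ν : Measure Ω := (ℙ : Measure Ω).withDensity (fun ω => (ρ ω : ℝ≥0∞)) with hν
  have hρae : ∀ᵐ ω, (ρ ω : ℝ) = Y ω / c := by
    filter_upwards [hYneg] with ω h
    exact Real.coe_toNNReal _ (div_nonneg_of_nonpos h.le hc.le)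
  haveI hprob : IsProbabilityMeasure ν := by
    constructor
    rw [hν, withDensity_apply _ MeasurableSet.univ, setLIntegral_univ]
    have hYdiv : Integrable (fun ω => Y ω / c) := hY.div_const c
    have hnn : 0 ≤ᵐ[(ℙ : Measure Ω)] fun ω => Y ω / c :=
      hYneg.mono fun ω h => by
        simp only [Pi.zero_apply]
        exact div_nonneg_of_nonpos h.le hc.le
    have h1 : ∫⁻ ω, (ρ ω : ℝ≥0∞) ∂ℙ = ENNReal.ofReal (∫ ω, Y ω / c) :=
      (ofReal_integral_eq_lintegral_ofReal hYdiv hnn).symm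
    rw [h1, integral_div, ← hcdef, div_self hcne]
    simp
  set f : Ω → Fin d → ℝ := fun ω => (Y ω)⁻¹ • Z ω with hf
  -- the density-weighted functions
  have hsmulf : (fun ω => ρ ω • f ω) =ᵐ[ℙ] fun ω => c⁻¹ • Z ω := by
    filter_upwards [hYneg, hρae] with ω h hρω
    have hYne : Y ω ≠ 0 := h.ne
    rw [NNReal.smul_def, hρω, hf, smul_smul]
    congr 1
    field_simp
  have hsmulg : (fun ω => ρ ω • g (f ω)) =ᵐ[ℙ] fun ω => c⁻¹ * (Y ω * g (f ω)) := by
    filter_upwards [hYneg, hρae] with ω h hρω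
    have hYne : Y ω ≠ 0 := h.ne
    rw [NNReal.smul_def, hρω, smul_eq_mul]
    field_simp
  have hfν : Integrable f ν := by
    rw [hν]
    rw [integrable_withDensity_iff_integrable_smul₀ hρ]
    exact (integrable_congr hsmulf).2 (hZ.smul c⁻¹)
  have hgν : Integrable (fun ω => g (f ω)) ν := by
    rw [hν]
    rw [integrable_withDensity_iff_integrable_smul₀ hρ]
    exact (integrable_congr hsmulg).2 (hint.const_mul c⁻¹)
  have hac : ae ν ≤ ae (ℙ : Measure Ω) :=
    (withDensity_absolutelyContinuous ℙ _).ae_le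
  have hmemν : ∀ᵐ ω ∂ν, f ω ∈ D := hmem.filter_mono hac
  have hintf : ∫ ω, f ω ∂ν = c⁻¹ • ∫ ω, Z ω := by
    rw [hν, integral_withDensity_eq_integral_smul₀ hρ, integral_congr_ae hsmulf,
      integral_smul]
  have hintg : ∫ ω, g (f ω) ∂ν = c⁻¹ * ∫ ω, Y ω * g (f ω) := by
    rw [hν, integral_withDensity_eq_integral_smul₀ hρ, integral_congr_ae hsmulg,
      integral_const_mul]
  have hbmem : (∫ ω, f ω ∂ν) ∈ D := by
    rw [hintf]
    exact hmem'
  have hJ := jensen_aux (Module.finrank ℝ (Fin d → ℝ)) (Fin d → ℝ) le_rfl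
    ν D hD g hg f hfν hmemν hgν hbmem
  rw [hintf, hintg] at hJ
  have h2 : c * (c⁻¹ * ∫ ω, Y ω * g (f ω)) ≤ c * g (c⁻¹ • ∫ ω, Z ω) :=
    mul_le_mul_of_nonpos_left hJ hc.le
  rw [← mul_assoc, mul_inv_cancel₀ hcne, one_mul] at h2
  exact h2
end

section
/- Let N = inf{n ∈ 𝒩 : (n, Sₙ) ∈ R} where Sₙ is the partial sum of i.i.d. random vectors with mean μ and R is a convex stopping region. Let A = {t ≥ 0 : (t, tμ) ∈ R}. If A is nonempty then E[N] ≥ inf A; if A is empty then E[N] = ∞. -/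
open MeasureTheory ProbabilityTheory Set Filter
open scoped ENNReal Topology

universe uO

theorem barycenter_aux {Ω : Type uO} [MeasurableSpace Ω] (n : ℕ) :
    ∀ (E : Type) [NormedAddCommGroup E] [NormedSpace ℝ E] [MeasurableSpace E] [BorelSpace E]
      [FiniteDimensional ℝ E] (_ : Module.finrank ℝ E ≤ n)
      (P : Measure Ω) [IsProbabilityMeasure P] (C : Set E) (_ : Convex ℝ C)
      (Z : Ω → E) (_ : Measurable Z) (_ : Integrable Z P)
      (_ : ∀ B : Set E, MeasurableSet B → B ∩ C = ∅ → P (Z ⁻¹' B) = 0),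
      (∫ ω, Z ω ∂P) ∈ C := by
  induction n with
  | zero =>
    intro E _ _ _ _ _ hrank P _ C hC Z hZm hZi hout
    have hss : Subsingleton E :=
      Module.finrank_zero_iff.mp (le_antisymm hrank (Nat.zero_le _))
    have hCne : C.Nonempty := by
      by_contra h
      rw [Set.not_nonempty_iff_eq_empty] at h
      have := hout Set.univ MeasurableSet.univ (by simp [h])
      simp at this
    obtain ⟨c, hc⟩ := hCne
    have : (∫ ω, Z ω ∂P) = c := Subsingleton.elim _ _
    rw [this]; exact hc
  | succ n IH =>
    intro E _ _ _ _ _ hrank P _ C hC Z hZm hZi hout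
    have hCne : C.Nonempty := by
      by_contra h
      rw [Set.not_nonempty_iff_eq_empty] at h
      have := hout Set.univ MeasurableSet.univ (by simp [h])
      simp at this
    set b := ∫ ω, Z ω ∂P with hbdef
    -- b is in the closure of any convex set satisfying the outer condition
    have hclosure : ∀ (C' : Set E), Convex ℝ C' →
        (∀ B : Set E, MeasurableSet B → B ∩ C' = ∅ → P (Z ⁻¹' B) = 0) →
        b ∈ closure C' := by
      intro C' hC' hout'
      refine (hC'.closure).integral_mem isClosed_closure ?_ hZi
      have h0 : P (Z ⁻¹' (closure C')ᶜ) = 0 := by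
        refine hout' _ isClosed_closure.measurableSet.compl ?_
        ext x
        simp only [mem_inter_iff, mem_compl_iff, mem_empty_iff_false, iff_false, not_and]
        exact fun hx1 hx2 => hx1 (subset_closure hx2)
      rw [ae_iff]
      exact h0
    -- reduction to a lower-dimensional subspace
    have key : ∀ (C' : Set E), Convex ℝ C' →
        (∀ B : Set E, MeasurableSet B → B ∩ C' = ∅ → P (Z ⁻¹' B) = 0) →
        ∀ (p₀ : E), p₀ ∈ C' → ∀ (W : Submodule ℝ E), Module.finrank ℝ ↥W ≤ n →
        (∀ x ∈ C', x - p₀ ∈ W) → b ∈ C' := by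
      intro C' hC' hout' p₀ hp₀ W hWrank hsub
      letI : MeasurableSpace ↥W := borel ↥W
      haveI : BorelSpace ↥W := ⟨rfl⟩
      have hWclosed : IsClosed (W : Set E) := Submodule.closed_of_finiteDimensional W
      obtain ⟨W', hcompl⟩ := Submodule.exists_isCompl W
      set π : E →ₗ[ℝ] ↥W := W.projectionOnto W' hcompl with hπ
      set πL : E →L[ℝ] ↥W := LinearMap.toContinuousLinearMap π with hπL
      have hπLval : ∀ x : E, x ∈ W → ((πL x : ↥W) : E) = x := by
        intro x hx
        have h1 : πL x = π x := by
          rw [hπL, LinearMap.coe_toContinuousLinearMap']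
        rw [h1, hπ]
        rw [show x = ((⟨x, hx⟩ : ↥W) : E) from rfl,
          Submodule.projectionOnto_apply_left hcompl]
      set Z' : Ω → ↥W := fun ω => πL (Z ω - p₀) with hZ'
      have hZ'm : Measurable Z' := (πL.continuous.measurable).comp (hZm.sub measurable_const)
      have hZ'i : Integrable Z' P := πL.integrable_comp (hZi.sub (integrable_const p₀))
      set C₀ : Set ↥W := {w : ↥W | p₀ + (w : E) ∈ C'} with hC₀
      have hC₀conv : Convex ℝ C₀ := by
        intro w₁ hw₁ w₂ hw₂ a c ha hc hac
        show p₀ + ((a • w₁ + c • w₂ : ↥W) : E) ∈ C'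
        have h1 : a • (p₀ + (w₁ : E)) + c • (p₀ + (w₂ : E))
            = (a + c) • p₀ + ((a • w₁ + c • w₂ : ↥W) : E) := by
          push_cast
          module
        have h2 := hC' hw₁ hw₂ ha hc hac
        rwa [h1, hac, one_smul] at h2
      have hout₀ : ∀ B : Set ↥W, MeasurableSet B → B ∩ C₀ = ∅ → P (Z' ⁻¹' B) = 0 := by
        intro B hB hBC
        set B' : Set E := {x : E | x - p₀ ∈ W} ∩ ((fun x => πL (x - p₀)) ⁻¹' B) with hB'
        have hB'meas : MeasurableSet B' := by
          refine MeasurableSet.inter ?_ ?_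
          · exact (hWclosed.preimage (continuous_id.sub continuous_const)).measurableSet
          · exact (πL.continuous.comp (continuous_id.sub continuous_const)).measurable hB
        have hB'C : B' ∩ C' = ∅ := by
          ext x
          simp only [hB', mem_inter_iff, mem_setOf_eq, mem_preimage, mem_empty_iff_false,
            iff_false, not_and]
          rintro ⟨hxW, hxB⟩ hxC
          have hmem : πL (x - p₀) ∈ C₀ := by
            show p₀ + ((πL (x - p₀) : ↥W) : E) ∈ C'
            rw [hπLval _ hxW]
            simpa using hxC
          have : πL (x - p₀) ∈ B ∩ C₀ := ⟨hxB, hmem⟩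
          rw [hBC] at this
          exact this
        set B'' : Set E := {x : E | x - p₀ ∉ W} with hB''
        have hB''meas : MeasurableSet B'' := by
          have : B'' = ((fun x : E => x - p₀) ⁻¹' (W : Set E))ᶜ := by
            ext x; simp [hB'']
          rw [this]
          exact ((hWclosed.preimage (continuous_id.sub continuous_const)).measurableSet).compl
        have hB''C : B'' ∩ C' = ∅ := by
          ext x
          simp only [hB'', mem_inter_iff, mem_setOf_eq, mem_empty_iff_false, iff_false, not_and]
          exact fun hxW hxC => absurd (hsub x hxC) hxW
        have hss : Z' ⁻¹' B ⊆ Z ⁻¹' B' ∪ Z ⁻¹' B'' := by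
          intro ω hω
          by_cases h : Z ω - p₀ ∈ W
          · exact Or.inl ⟨h, hω⟩
          · exact Or.inr h
        exact measure_mono_null hss
          (measure_union_null (hout' B' hB'meas hB'C) (hout' B'' hB''meas hB''C))
      have hint_sub : Integrable (fun ω => Z ω - p₀) P := hZi.sub (integrable_const p₀)
      have hb₀ : ∫ ω, Z' ω ∂P = πL (b - p₀) := by
        have h1 : ∫ ω, Z' ω ∂P = πL (∫ ω, (Z ω - p₀) ∂P) :=
          ContinuousLinearMap.integral_comp_comm πL hint_sub
        rw [h1]
        congr 1
        rw [integral_sub hZi (integrable_const p₀), integral_const]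
        simp [hbdef]
      have hb₀mem : (∫ ω, Z' ω ∂P) ∈ C₀ :=
        IH ↥W hWrank P C₀ hC₀conv Z' hZ'm hZ'i hout₀
      have hbC' : b ∈ closure C' := hclosure C' hC' hout'
      have hbW : b - p₀ ∈ W := by
        have h1 : closure C' ⊆ {x : E | x - p₀ ∈ W} :=
          closure_minimal (fun x hx => hsub x hx)
            (hWclosed.preimage (continuous_id.sub continuous_const))
        exact h1 hbC'
      rw [hb₀] at hb₀mem
      have hfin : p₀ + ((πL (b - p₀) : ↥W) : E) ∈ C' := hb₀mem
      rwa [hπLval _ hbW, show p₀ + (b - p₀) = b by abel] at hfin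
    -- main case split
    by_cases hbi : b ∈ interior (closure C)
    · -- b in the interior of the closure: combine with an interior point of C
      have hspan_cl : affineSpan ℝ (closure C) = ⊤ := by
        rw [← Convex.interior_nonempty_iff_affineSpan_eq_top hC.closure]
        exact ⟨b, hbi⟩
      have hspan : affineSpan ℝ C = ⊤ := by
        refine top_unique ?_
        rw [← hspan_cl]
        refine affineSpan_le.mpr ?_
        exact closure_minimal (subset_affineSpan ℝ C) (affineSpan ℝ C).closed_of_finiteDimensional
      obtain ⟨x₀, hx₀⟩ := (Convex.interior_nonempty_iff_affineSpan_eq_top hC).mpr hspan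
      obtain ⟨δ, hδpos, hδ⟩ := Metric.isOpen_iff.mp isOpen_interior b hbi
      set ε : ℝ := δ / (2 * (‖b - x₀‖ + 1)) with hε
      have hM : (0:ℝ) ≤ ‖b - x₀‖ := norm_nonneg _
      have hεpos : 0 < ε := by positivity
      set z : E := b + ε • (b - x₀) with hz
      have hzmem : z ∈ closure C := by
        have h1 : z ∈ interior (closure C) := by
          apply hδ
          rw [Metric.mem_ball, dist_eq_norm, show z - b = ε • (b - x₀) by rw [hz]; abel,
            norm_smul, Real.norm_eq_abs, abs_of_pos hεpos]
          rw [hε, div_mul_eq_mul_div, div_lt_iff₀ (by positivity)]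
          nlinarith
        exact interior_subset h1
      have h1ε : (0:ℝ) < 1 + ε := by positivity
      have hcombo := hC.combo_interior_closure_mem_interior hx₀ hzmem
        (a := ε / (1 + ε)) (b := 1 / (1 + ε)) (by positivity) (by positivity)
        (by rw [← add_div, add_comm ε 1, div_self (ne_of_gt h1ε)])
      have heq : (ε / (1 + ε)) • x₀ + (1 / (1 + ε)) • z = b := by
        rw [hz]
        match_scalars <;> field_simp <;> ring
      rw [heq] at hcombo
      exact interior_subset hcombo
    · by_cases hine : (interior (closure C)).Nonempty
      · -- supporting hyperplane case
        obtain ⟨f, hf⟩ := geometric_hahn_banach_open_point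
          (hC.closure.interior) isOpen_interior hbi
        set u : ℝ := f b with hu
        have hscl : closure C ⊆ closure (interior (closure C)) := by
          obtain ⟨x₀, hx₀⟩ := hine
          intro y hy
          have h0 : Tendsto (fun k : ℕ => (1 / ((k:ℝ) + 1))) atTop (𝓝 0) :=
            tendsto_one_div_add_atTop_nhds_zero_nat
          have hseq : Tendsto
              (fun k : ℕ => (1 / ((k:ℝ) + 1)) • x₀ + (1 - 1 / ((k:ℝ) + 1)) • y) atTop (𝓝 y) := by
            have h1 : Tendsto (fun k : ℕ => (1 / ((k:ℝ) + 1)) • x₀) atTop (𝓝 ((0:ℝ) • x₀)) :=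
              h0.smul_const x₀
            have h2 : Tendsto (fun k : ℕ => (1 - 1 / ((k:ℝ) + 1)) • y) atTop
                (𝓝 (((1:ℝ) - 0) • y)) := ((tendsto_const_nhds.sub h0).smul_const y)
            have h3 := h1.add h2
            simp only [zero_smul, sub_zero, one_smul, zero_add] at h3
            exact h3
          refine mem_closure_of_tendsto hseq (Eventually.of_forall fun k => ?_)
          have hkpos : (0:ℝ) < 1 / ((k:ℝ) + 1) := by positivity
          have hkle : (1 : ℝ) / ((k:ℝ) + 1) ≤ 1 := by
            rw [div_le_one (by positivity)]
            norm_num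
          refine hC.closure.combo_interior_closure_mem_interior hx₀ ?_ hkpos
            (by linarith) (by ring)
          rwa [closure_closure]
        have hfle : ∀ x ∈ closure C, f x ≤ u := by
          intro x hx
          have h1 : closure (interior (closure C)) ⊆ f ⁻¹' (Iic u) :=
            closure_minimal (fun a ha => (hf a ha).le)
              (isClosed_Iic.preimage f.continuous)
          exact h1 (hscl hx)
        have hmeasf : Measurable f := f.continuous.measurable
        have hgt0 : P (Z ⁻¹' {x | u < f x}) = 0 := by
          refine hout _ (measurableSet_lt measurable_const hmeasf) ?_
          ext x
          simp only [mem_inter_iff, mem_setOf_eq, mem_empty_iff_false, iff_false, not_and]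
          exact fun hx1 hx2 => absurd (hfle x (subset_closure hx2)) (not_le.mpr hx1)
        have haele : ∀ᵐ ω ∂P, f (Z ω) ≤ u := by
          rw [ae_iff]
          convert hgt0 using 2
          ext ω
          simp [not_le]
        have hfZi : Integrable (fun ω => f (Z ω)) P := f.integrable_comp hZi
        have hEf : ∫ ω, f (Z ω) ∂P = u := by
          rw [ContinuousLinearMap.integral_comp_comm f hZi]
        have haeeq : ∀ᵐ ω ∂P, f (Z ω) = u := by
          have hnn : 0 ≤ᵐ[P] fun ω => u - f (Z ω) :=
            haele.mono fun ω h => sub_nonneg.mpr h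
          have hinteg : Integrable (fun ω => u - f (Z ω)) P := (integrable_const u).sub hfZi
          have hzero : ∫ ω, (u - f (Z ω)) ∂P = 0 := by
            rw [integral_sub (integrable_const u) hfZi, integral_const, hEf]
            simp
          have hae0 := (integral_eq_zero_iff_of_nonneg_ae hnn hinteg).mp hzero
          filter_upwards [hae0] with ω hω
          have : u - f (Z ω) = 0 := hω
          linarith
        set C' : Set E := C ∩ {x | f x = u} with hC'def
        have hC'conv : Convex ℝ C' := by
          refine hC.inter ?_
          have : {x : E | f x = u} = (f : E →ₗ[ℝ] ℝ) ⁻¹' {u} := by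
            ext x; simp
          rw [this]
          exact (convex_singleton u).linear_preimage _
        have hout' : ∀ B : Set E, MeasurableSet B → B ∩ C' = ∅ → P (Z ⁻¹' B) = 0 := by
          intro B hB hBC'
          have hBeq : MeasurableSet {x : E | f x = u} :=
            measurableSet_eq_fun hmeasf measurable_const
          have hB1 : P (Z ⁻¹' (B ∩ {x | f x = u})) = 0 := by
            refine hout _ (hB.inter hBeq) ?_
            rw [inter_assoc, inter_comm {x | f x = u} C, ← hC'def]
            exact hBC'
          have hB2 : P (Z ⁻¹' (B ∩ {x | f x ≠ u})) = 0 := by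
            refine measure_mono_null ?_ (ae_iff.mp haeeq)
            intro ω hω
            exact hω.2
          have hss : Z ⁻¹' B ⊆ Z ⁻¹' (B ∩ {x | f x = u}) ∪ Z ⁻¹' (B ∩ {x | f x ≠ u}) := by
            intro ω h
            by_cases hfz : f (Z ω) = u
            · exact Or.inl ⟨h, hfz⟩
            · exact Or.inr ⟨h, hfz⟩
          exact measure_mono_null hss (measure_union_null hB1 hB2)
        have hC'ne : C'.Nonempty := by
          by_contra h
          rw [Set.not_nonempty_iff_eq_empty] at h
          have := hout' Set.univ MeasurableSet.univ (by simp [h])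
          simp at this
        obtain ⟨p₀, hp₀⟩ := hC'ne
        set W : Submodule ℝ E := LinearMap.ker (f : E →ₗ[ℝ] ℝ) with hW
        have hWrank : Module.finrank ℝ ↥W ≤ n := by
          have hWne : W ≠ ⊤ := by
            obtain ⟨x₀, hx₀⟩ := hine
            intro htop
            have h1 : x₀ - b ∈ W := htop ▸ Submodule.mem_top
            have h2 : f (x₀ - b) = 0 := by
              simpa [hW, LinearMap.mem_ker] using h1
            rw [map_sub] at h2
            have := hf x₀ hx₀
            linarith
          have := Submodule.finrank_lt hWne
          omega
        have hsubW : ∀ x ∈ C', x - p₀ ∈ W := by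
          intro x hx
          have h1 : f x = u := hx.2
          have h2 : f p₀ = u := hp₀.2
          simp [hW, LinearMap.mem_ker, map_sub, h1, h2]
        exact (key C' hC'conv hout' p₀ hp₀ W hWrank hsubW).1
      · -- empty interior of the closure: everything lives in a proper affine subspace
        have hspan_ne : affineSpan ℝ (closure C) ≠ ⊤ := by
          intro htop
          exact hine ((Convex.interior_nonempty_iff_affineSpan_eq_top hC.closure).mpr htop)
        obtain ⟨p₀, hp₀⟩ := hCne
        set A := affineSpan ℝ (closure C) with hA
        set W := A.direction with hWdef
        have hp₀A : p₀ ∈ A := subset_affineSpan ℝ _ (subset_closure hp₀)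
        have hWrank : Module.finrank ℝ ↥W ≤ n := by
          have hWne : W ≠ ⊤ := by
            intro htop
            apply hspan_ne
            rw [eq_top_iff]
            rintro x -
            have hx' : x - p₀ ∈ A.direction := by rw [← hWdef, htop]; trivial
            have := AffineSubspace.vadd_mem_of_mem_direction hx' hp₀A
            simpa using this
          have := Submodule.finrank_lt hWne
          omega
        have hsubW : ∀ x ∈ C, x - p₀ ∈ W := by
          intro x hx
          have h1 : x ∈ A := subset_affineSpan _ _ (subset_closure hx)
          simpa using AffineSubspace.vsub_mem_direction h1 hp₀A
        exact key C hC hout p₀ hp₀ W hWrank hsubW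


theorem convex_stopping_region_lower_bound {Ω : Type*} [MeasureSpace Ω]
    [IsProbabilityMeasure (ℙ : Measure Ω)] {d : ℕ}
    (X : ℕ → Ω → Fin d → ℝ) (μ : Fin d → ℝ)
    (hmeas : ∀ i, Measurable (X i))
    (hint : ∀ i, Integrable (X i))
    (hindep : iIndepFun X ℙ)
    (hident : ∀ i, Measure.map (X i) ℙ = Measure.map (X 0) ℙ)
    (hmean : ∀ i, (∫ ω, X i ω) = μ)
    (𝒩 : Set ℕ) (R : Set (ℝ × (Fin d → ℝ))) (hR : Convex ℝ R)
    (N : Ω → ℝ≥0∞)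
    (hN : ∀ ω, N ω = ⨅ (n : ℕ) (_ : n ∈ 𝒩 ∧
      ((n : ℝ), ∑ i ∈ Finset.range n, X i ω) ∈ R), (n : ℝ≥0∞)) :
    ({t : ℝ | 0 ≤ t ∧ (t, t • μ) ∈ R}.Nonempty →
      ENNReal.ofReal (sInf {t : ℝ | 0 ≤ t ∧ (t, t • μ) ∈ R}) ≤ ∫⁻ ω, N ω) ∧
    ({t : ℝ | 0 ≤ t ∧ (t, t • μ) ∈ R} = ∅ → ∫⁻ ω, N ω = ⊤) := by
  classical
  -- prefix maps and partial sums
  set P : (n : ℕ) → Ω → (Fin n → Fin d → ℝ) := fun n ω i => X i ω with hP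
  have hPm : ∀ n, Measurable (P n) := fun n => measurable_pi_lambda _ fun i => hmeas i
  set S : ℕ → Ω → (Fin d → ℝ) := fun n ω => ∑ i ∈ Finset.range n, X i ω with hS
  have hSm : ∀ n, Measurable (S n) := fun n => Finset.measurable_sum _ fun i _ => hmeas i
  set G : (n : ℕ) → Set (Fin n → Fin d → ℝ) :=
    fun n => {a | n ∈ 𝒩 ∧ (((n : ℕ) : ℝ), ∑ i, a i) ∈ R} with hG
  have hPG : ∀ n ω, ω ∈ P n ⁻¹' (G n) ↔ (n ∈ 𝒩 ∧ ((n : ℝ), S n ω) ∈ R) := by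
    intro n ω
    simp only [hP, hG, mem_preimage, mem_setOf_eq, hS]
    rw [Fin.sum_univ_eq_sum_range (fun i => X i ω) n]
  set ν : (n : ℕ) → Measure (Fin n → Fin d → ℝ) := fun n => Measure.map (P n) ℙ with hν
  set Gm : (n : ℕ) → Set (Fin n → Fin d → ℝ) :=
    fun n => toMeasurable (ν n) (G n ∩ Set.range (P n)) with hGm
  set H : ℕ → Set Ω := fun n => P n ⁻¹' (Gm n) with hH
  have hHm : ∀ n, MeasurableSet (H n) := fun n => (hPm n) (measurableSet_toMeasurable _ _)
  have hEH : ∀ n, P n ⁻¹' (G n) ⊆ H n := by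
    intro n ω hω
    exact subset_toMeasurable _ _ ⟨hω, mem_range_self ω⟩
  -- tightness of the hull
  have htight : ∀ n (B : Set (Fin n → Fin d → ℝ)), MeasurableSet B →
      (P n ⁻¹' B ⊆ H n) → (P n ⁻¹' B ∩ P n ⁻¹' (G n) = ∅) → ℙ (P n ⁻¹' B) = 0 := by
    intro n B hB hBH hBE
    haveI : IsProbabilityMeasure (ν n) := Measure.isProbabilityMeasure_map (hPm n).aemeasurable
    have hmap : ∀ (B' : Set (Fin n → Fin d → ℝ)), MeasurableSet B' →
        ν n B' = ℙ (P n ⁻¹' B') := fun B' hB' => Measure.map_apply (hPm n) hB'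
    have hGmMeas : MeasurableSet (Gm n) := measurableSet_toMeasurable _ _
    have h1 : ν n (B \ Gm n) = 0 := by
      rw [hmap _ (hB.diff hGmMeas)]
      have hempty : P n ⁻¹' (B \ Gm n) = ∅ := by
        rw [preimage_diff]
        exact diff_eq_empty.mpr hBH
      rw [hempty, measure_empty]
    have h2 : ν n (B ∩ Gm n) = 0 := by
      have hsub2 : G n ∩ Set.range (P n) ⊆ Gm n \ B := by
        rintro x ⟨hxG, ω, rfl⟩
        refine ⟨subset_toMeasurable _ _ ⟨hxG, mem_range_self ω⟩, fun hxB => ?_⟩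
        have hcontra : ω ∈ P n ⁻¹' B ∩ P n ⁻¹' (G n) := ⟨hxB, hxG⟩
        rw [hBE] at hcontra
        exact hcontra
      have hle : ν n (Gm n) ≤ ν n (Gm n \ B) := by
        rw [hGm]
        rw [measure_toMeasurable]
        exact measure_mono hsub2
      have hsplit : ν n (Gm n \ B) + ν n (Gm n ∩ B) = ν n (Gm n) :=
        measure_diff_add_inter _ hB
      have hcalc : ν n (Gm n \ B) + ν n (Gm n ∩ B) ≤ ν n (Gm n \ B) + 0 := by
        rw [add_zero, hsplit]
        exact hle
      have hz : ν n (Gm n ∩ B) = 0 :=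
        le_antisymm (ENNReal.le_of_add_le_add_left (measure_ne_top _ _) hcalc) (by positivity)
      rw [inter_comm]
      exact hz
    rw [← hmap B hB, ← Set.inter_union_diff B (Gm n)]
    exact measure_union_null h2 h1
  -- the events A i = "no hit up to time i", hitting time τ
  set A : ℕ → Set Ω := fun i => ⋂ n ∈ Finset.range (i + 1), (H n)ᶜ with hA
  have hAm : ∀ i, MeasurableSet (A i) :=
    fun i => MeasurableSet.biInter (Finset.range (i + 1)).countable_toSet
      (fun n _ => (hHm n).compl)
  have hAmem : ∀ i ω, ω ∈ A i ↔ ∀ n ≤ i, ω ∉ H n := by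
    intro i ω
    simp [hA, Finset.mem_range, Nat.lt_succ_iff]
  set τ : Ω → ℕ := fun ω => sInf {n | ω ∈ H n} with hτ
  set D : Set Ω := ⋃ n, H n with hD
  have hDm : MeasurableSet D := MeasurableSet.iUnion hHm
  have hDmem : ∀ ω, ω ∈ D ↔ {n | ω ∈ H n}.Nonempty := by
    intro ω
    simp [hD, mem_iUnion, Set.Nonempty, mem_setOf_eq]
  have hτmem : ∀ ω ∈ D, ω ∈ H (τ ω) := fun ω hω => Nat.sInf_mem ((hDmem ω).mp hω)
  have hτle : ∀ ω n, ω ∈ H n → τ ω ≤ n := fun ω n h => Nat.sInf_le h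
  have hτDc : ∀ ω, ω ∉ D → τ ω = 0 := by
    intro ω hω
    have hempty : {n | ω ∈ H n} = ∅ := by
      ext n
      simp only [mem_setOf_eq, mem_empty_iff_false, iff_false]
      exact fun h => hω (mem_iUnion.mpr ⟨n, h⟩)
    rw [hτ]
    simp only [hempty, Nat.sInf_empty]
  have hAiff : ∀ ω ∈ D, ∀ i, (ω ∈ A i ↔ i < τ ω) := by
    intro ω hω i
    rw [hAmem]
    constructor
    · intro h
      by_contra hlt
      push_neg at hlt
      exact h (τ ω) hlt (hτmem ω hω)
    · intro h n hn hHn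
      have := hτle ω n hHn
      omega
  have hτm : Measurable τ := by
    apply measurable_to_countable'
    intro n
    have hset : τ ⁻¹' {n} =
        (H n ∩ ⋂ m ∈ Finset.range n, (H m)ᶜ) ∪ (if n = 0 then Dᶜ else ∅) := by
      ext ω
      simp only [mem_preimage, mem_singleton_iff, mem_union, mem_inter_iff, mem_iInter,
        mem_compl_iff, Finset.mem_range]
      constructor
      · intro hτn
        by_cases hωD : ω ∈ D
        · left
          refine ⟨hτn ▸ hτmem ω hωD, fun m hm hHm' => ?_⟩
          have := hτle ω m hHm'
          omega
        · right
          have h0 := hτDc ω hωD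
          have hn0 : n = 0 := by omega
          rw [if_pos hn0]
          exact hωD
      · rintro (⟨hHn, hmin⟩ | h)
        · have hωD : ω ∈ D := mem_iUnion.mpr ⟨n, hHn⟩
          have h1 : τ ω ≤ n := hτle ω n hHn
          have h2 : ¬ τ ω < n := fun hlt => hmin (τ ω) hlt (hτmem ω hωD)
          omega
        · by_cases hn0 : n = 0
          · rw [if_pos hn0] at h
            rw [hn0]
            exact hτDc ω h
          · rw [if_neg hn0] at h
            exact absurd h (notMem_empty ω)
    apply MeasurableSet.congr _ hset.symm
    refine MeasurableSet.union ?_ ?_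
    · exact (hHm n).inter (MeasurableSet.biInter (Finset.range n).countable_toSet
        fun m _ => (hHm m).compl)
    · split_ifs
      · exact hDm.compl
      · exact MeasurableSet.empty
  -- switching lemma
  have hswitch : ∀ {β : Type} [MeasurableSpace β] (g : ℕ → Ω → β), (∀ n, Measurable (g n)) →
      Measurable (fun ω => g (τ ω) ω) := by
    intro β _ g hg t ht
    have hpre : (fun ω => g (τ ω) ω) ⁻¹' t = ⋃ n, (τ ⁻¹' {n}) ∩ (g n ⁻¹' t) := by
      ext ω
      simp only [mem_preimage, mem_iUnion, mem_inter_iff, mem_singleton_iff]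
      constructor
      · intro h
        exact ⟨τ ω, rfl, h⟩
      · rintro ⟨n, hn, h⟩
        rw [hn]
        exact h
    rw [hpre]
    exact MeasurableSet.iUnion fun n => (hτm (measurableSet_singleton n)).inter (hg n ht)
  set τR : Ω → ℝ := fun ω => ((τ ω : ℕ) : ℝ) with hτR
  have hτRm : Measurable τR := hswitch (fun n _ => ((n : ℕ) : ℝ)) (fun n => measurable_const)
  set Sτ : Ω → (Fin d → ℝ) := fun ω => S (τ ω) ω with hSτ
  have hSτm : Measurable Sτ := hswitch S hSm
  set Z : Ω → ℝ × (Fin d → ℝ) := fun ω => (τR ω, Sτ ω) with hZ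
  have hZm : Measurable Z := hτRm.prodMk hSτm
  -- m2 and the basic bound m2 ≤ ∫⁻ N
  set m2 : ℝ≥0∞ := ∑' i, ℙ (A i) with hm2
  have hm2le : m2 ≤ ∫⁻ ω, N ω := by
    have hgN : ∀ ω, (∑' i, (A i).indicator (fun _ => (1 : ℝ≥0∞)) ω) ≤ N ω := by
      intro ω
      rw [hN ω]
      refine le_iInf fun n => le_iInf fun hn => ?_
      have hωHn : ω ∈ H n := hEH n ((hPG n ω).mpr ⟨hn.1, hn.2⟩)
      have hzero : ∀ i ∉ Finset.range n, (A i).indicator (fun _ => (1 : ℝ≥0∞)) ω = 0 := by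
        intro i hi
        rw [Finset.mem_range, not_lt] at hi
        apply Set.indicator_of_notMem
        rw [hAmem]
        push_neg
        exact ⟨n, hi, hωHn⟩
      rw [tsum_eq_sum hzero]
      calc ∑ i ∈ Finset.range n, (A i).indicator (fun _ => (1 : ℝ≥0∞)) ω
          ≤ ∑ _i ∈ Finset.range n, 1 :=
            Finset.sum_le_sum (fun i _ => by by_cases h : ω ∈ A i <;> simp [h])
        _ = n := by simp
    have hint_g : ∫⁻ ω, (∑' i, (A i).indicator (fun _ => (1 : ℝ≥0∞)) ω) = m2 := by
      rw [lintegral_tsum (fun i => (measurable_const.indicator (hAm i)).aemeasurable)]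
      exact tsum_congr fun i => by rw [lintegral_indicator_const (hAm i), one_mul]
    calc m2 = ∫⁻ ω, (∑' i, (A i).indicator (fun _ => (1 : ℝ≥0∞)) ω) := hint_g.symm
      _ ≤ ∫⁻ ω, N ω := lintegral_mono hgN
  -- cylinder representation of A i
  have hcyl : ∀ i, ∃ Ci : Set (Fin i → Fin d → ℝ), MeasurableSet Ci ∧ A i = P i ⁻¹' Ci := by
    intro i
    refine ⟨⋂ (n : ℕ) (h : n < i + 1), ((fun (a : Fin i → Fin d → ℝ) (j : Fin n) =>
      a (Fin.castLE (by omega : n ≤ i) j)) ⁻¹' (Gm n))ᶜ, ?_, ?_⟩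
    · refine MeasurableSet.iInter fun n => MeasurableSet.iInter fun h => ?_
      exact ((measurable_pi_lambda _ fun j => measurable_pi_apply _)
        (measurableSet_toMeasurable _ _)).compl
    · ext ω
      rw [hAmem]
      simp only [mem_preimage, mem_iInter, mem_compl_iff]
      constructor
      · intro hω n hn
        exact hω n (by omega)
      · intro hω n hn
        exact hω n (by omega)
  -- independence
  have hbaseIndep : ∀ i, IndepFun (P i) (X i) ℙ := by
    intro i
    have h1 := hindep.indepFun_finset (Finset.range i) {i}
      (by simp [Finset.disjoint_singleton_right, Finset.mem_range]) hmeas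
    have h2 : IndepFun
        ((fun (a : ↥(Finset.range i) → (Fin d → ℝ)) (j : Fin i) =>
          a ⟨(j : ℕ), by simpa [Finset.mem_range] using j.isLt⟩) ∘
            (fun ω (j : ↥(Finset.range i)) => X (j : ℕ) ω))
        ((fun (a : ↥({i} : Finset ℕ) → (Fin d → ℝ)) =>
          a ⟨i, Finset.mem_singleton_self i⟩) ∘ (fun ω (j : ↥({i} : Finset ℕ)) => X (j : ℕ) ω)) ℙ :=
      h1.comp (measurable_pi_lambda _ fun j => measurable_pi_apply _) (measurable_pi_apply _)
    exact h2
  have hindepA : ∀ i (φ : (Fin d → ℝ) → ℝ), Measurable φ →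
      IndepFun (fun ω => (A i).indicator (fun _ => (1:ℝ)) ω) (fun ω => φ (X i ω)) ℙ := by
    intro i φ hφ
    obtain ⟨Ci, hCim, hCieq⟩ := hcyl i
    have h4 : IndepFun ((fun a => Ci.indicator (fun _ => (1:ℝ)) a) ∘ (P i)) (φ ∘ (X i)) ℙ :=
      (hbaseIndep i).comp (measurable_const.indicator hCim) hφ
    have heq : (fun ω => (A i).indicator (fun _ => (1:ℝ)) ω) =
        (fun a => Ci.indicator (fun _ => (1:ℝ)) a) ∘ (P i) := by
      funext ω
      by_cases h : ω ∈ A i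
      · have h2 : P i ω ∈ Ci := by rw [hCieq] at h; exact h
        simp [Function.comp, Set.indicator_of_mem, h, h2]
      · have h2 : P i ω ∉ Ci := by rw [hCieq] at h; exact h
        simp [Function.comp, Set.indicator_of_notMem, h, h2]
    rw [heq]
    exact h4
  have hintI : ∀ i, Integrable (fun ω => (A i).indicator (fun _ => (1:ℝ)) ω) ℙ :=
    fun i => (integrable_const (1:ℝ)).indicator (hAm i)
  have hEind : ∀ i, ∫ ω, (A i).indicator (fun _ => (1:ℝ)) ω = (ℙ (A i)).toReal := by
    intro i
    rw [integral_indicator_const (1:ℝ) (hAm i)]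
    simp [measureReal_def]
  have hprod : ∀ i (φ : (Fin d → ℝ) → ℝ), Measurable φ → Integrable (fun ω => φ (X i ω)) ℙ →
      Integrable (fun ω => (A i).indicator (fun _ => (1:ℝ)) ω * φ (X i ω)) ℙ ∧
      ∫ ω, (A i).indicator (fun _ => (1:ℝ)) ω * φ (X i ω) =
        (ℙ (A i)).toReal * ∫ ω, φ (X i ω) := by
    intro i φ hφ hφi
    have hIF := hindepA i φ hφ
    have hprodInt : Integrable (fun ω => (A i).indicator (fun _ => (1:ℝ)) ω * φ (X i ω)) ℙ := by
      refine Integrable.mono' hφi.norm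
        (((measurable_const.indicator (hAm i)).mul (hφ.comp (hmeas i))).aestronglyMeasurable)
        (Eventually.of_forall fun ω => ?_)
      rw [norm_mul]
      by_cases h : ω ∈ A i
      · simp [Set.indicator_of_mem h]
      · simp [Set.indicator_of_notMem h, norm_nonneg]
    refine ⟨hprodInt, ?_⟩
    calc ∫ ω, (A i).indicator (fun _ => (1:ℝ)) ω * φ (X i ω)
        = (∫ ω, (A i).indicator (fun _ => (1:ℝ)) ω) * ∫ ω, φ (X i ω) :=
          hIF.integral_mul_eq_mul_integral (hintI i).aestronglyMeasurable hφi.aestronglyMeasurable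
      _ = (ℙ (A i)).toReal * ∫ ω, φ (X i ω) := by rw [hEind i]
  -- identical distribution transfer
  have hconstφ : ∀ (φ : (Fin d → ℝ) → ℝ), Measurable φ → ∀ i,
      ∫ ω, φ (X i ω) = ∫ ω, φ (X 0 ω) := by
    intro φ hφ i
    rw [← integral_map (hmeas i).aemeasurable hφ.aestronglyMeasurable, hident i,
      integral_map (hmeas 0).aemeasurable hφ.aestronglyMeasurable]
  have hEcoord : ∀ i (k : Fin d), ∫ ω, X i ω k = μ k := by
    intro i k
    have h1 := ContinuousLinearMap.integral_comp_comm
      (ContinuousLinearMap.proj (R := ℝ) (φ := fun _ : Fin d => ℝ) k) (hint i)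
    simp only [ContinuousLinearMap.proj_apply] at h1
    rw [h1, hmean i]
  have hIcoord : ∀ i (k : Fin d), Integrable (fun ω => X i ω k) ℙ := fun i k =>
    (ContinuousLinearMap.proj (R := ℝ) (φ := fun _ : Fin d => ℝ) k).integrable_comp (hint i)
  have hInorm : ∀ i, Integrable (fun ω => ‖X i ω‖) ℙ := fun i => (hint i).norm
  -- main finite-expectation argument
  have main : (∫⁻ ω, N ω) ≠ ⊤ →
      ∃ t : ℝ, 0 ≤ t ∧ (t, t • μ) ∈ R ∧ ENNReal.ofReal t ≤ ∫⁻ ω, N ω := by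
    intro hfin
    have hm2ne : m2 ≠ ⊤ := fun h => hfin (top_le_iff.mp (h ▸ hm2le))
    have hAine : ∀ i, ℙ (A i) ≠ ⊤ := fun i => measure_ne_top _ _
    have hDc : ℙ Dᶜ = 0 := by
      by_contra hne
      have hsub : ∀ i, Dᶜ ⊆ A i := by
        intro i ω hω
        rw [hAmem]
        intro n _ hHn
        exact hω (mem_iUnion.mpr ⟨n, hHn⟩)
      have hbig : (∑' (_ : ℕ), ℙ Dᶜ) ≤ m2 := ENNReal.tsum_le_tsum fun i => measure_mono (hsub i)
      rw [ENNReal.tsum_const_eq_top_of_ne_zero hne] at hbig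
      exact hm2ne (top_le_iff.mp hbig)
    have hDae : ∀ᵐ ω ∂(ℙ : Measure Ω), ω ∈ D := by
      rw [ae_iff]
      exact hDc
    have hindval : ∀ ω ∈ D, ∀ i,
        (A i).indicator (fun _ => (1:ℝ)) ω = if i < τ ω then 1 else 0 := by
      intro ω hω i
      by_cases h : ω ∈ A i
      · rw [Set.indicator_of_mem h, if_pos ((hAiff ω hω i).mp h)]
      · rw [Set.indicator_of_notMem h, if_neg (fun hlt => h ((hAiff ω hω i).mpr hlt))]
    -- Wald identity for scalar functionals
    have hwald : ∀ (φ : (Fin d → ℝ) → ℝ), Measurable φ →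
        (∀ i, Integrable (fun ω => φ (X i ω)) ℙ) →
        Integrable (fun ω => ∑ j ∈ Finset.range (τ ω), φ (X j ω)) ℙ ∧
        ∫ ω, (∑ j ∈ Finset.range (τ ω), φ (X j ω)) = m2.toReal * ∫ ω, φ (X 0 ω) := by
      intro φ hφ hφint
      set F : ℕ → Ω → ℝ := fun i ω => (A i).indicator (fun _ => (1:ℝ)) ω * φ (X i ω) with hF
      have hFm : ∀ i, Measurable (F i) :=
        fun i => (measurable_const.indicator (hAm i)).mul (hφ.comp (hmeas i))
      have hFint : ∀ i, Integrable (F i) ℙ := fun i => (hprod i φ hφ (hφint i)).1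
      have hFeq : ∀ i, ∫ ω, F i ω = (ℙ (A i)).toReal * ∫ ω, φ (X 0 ω) := by
        intro i
        rw [hF]
        rw [(hprod i φ hφ (hφint i)).2, hconstφ φ hφ i]
      have hFabs : ∀ i, ∫ ω, |F i ω| = (ℙ (A i)).toReal * ∫ ω, |φ (X 0 ω)| := by
        intro i
        have h1 := (hprod i (fun v => |φ v|) hφ.abs (hφint i).abs).2
        have h2 : ∀ ω, |F i ω| = (A i).indicator (fun _ => (1:ℝ)) ω * |φ (X i ω)| := by
          intro ω
          rw [hF, abs_mul]
          congr 1
          by_cases h : ω ∈ A i <;> simp [h]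
        simp_rw [h2]
        rw [h1, hconstφ (fun v => |φ v|) hφ.abs i]
      have hlint : ∀ i, ∫⁻ ω, ‖F i ω‖₊ =
          ENNReal.ofReal ((ℙ (A i)).toReal * ∫ ω, |φ (X 0 ω)|) := by
        intro i
        rw [show (∫⁻ ω, (‖F i ω‖₊ : ℝ≥0∞)) = ∫⁻ ω, ‖F i ω‖ₑ from rfl,
          ← ofReal_integral_norm_eq_lintegral_enorm (hFint i)]
        congr 1
        simp_rw [Real.norm_eq_abs]
        exact hFabs i
      have htsum_ne : (∑' i, ∫⁻ ω, ‖F i ω‖₊) ≠ ⊤ := by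
        have hb : ∀ i, ∫⁻ ω, ‖F i ω‖₊ ≤ ℙ (A i) * ENNReal.ofReal (∫ ω, |φ (X 0 ω)|) := by
          intro i
          rw [hlint i, ENNReal.ofReal_mul ENNReal.toReal_nonneg,
            ENNReal.ofReal_toReal (hAine i)]
        refine ne_top_of_le_ne_top ?_ (ENNReal.tsum_le_tsum hb)
        rw [ENNReal.tsum_mul_right]
        exact ENNReal.mul_ne_top hm2ne ENNReal.ofReal_ne_top
      have haes : (fun ω => ∑' i, F i ω) =ᵐ[ℙ]
          (fun ω => ∑ j ∈ Finset.range (τ ω), φ (X j ω)) := by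
        filter_upwards [hDae] with ω hω
        have hzero : ∀ i ∉ Finset.range (τ ω), F i ω = 0 := by
          intro i hi
          rw [Finset.mem_range, not_lt] at hi
          rw [hF]
          simp only
          rw [hindval ω hω i, if_neg (by omega), zero_mul]
        rw [tsum_eq_sum hzero]
        refine Finset.sum_congr rfl fun i hi => ?_
        rw [Finset.mem_range] at hi
        rw [hF]
        simp only
        rw [hindval ω hω i, if_pos hi, one_mul]
      have hmeasSum : Measurable (fun ω => ∑ j ∈ Finset.range (τ ω), φ (X j ω)) :=
        hswitch (fun n ω => ∑ j ∈ Finset.range n, φ (X j ω))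
          (fun n => Finset.measurable_sum _ fun j _ => hφ.comp (hmeas j))
      have hfi : HasFiniteIntegral (fun ω => ∑ j ∈ Finset.range (τ ω), φ (X j ω)) ℙ := by
        rw [hasFiniteIntegral_def]
        have hptwise : ∀ᵐ ω ∂(ℙ : Measure Ω),
            (‖∑ j ∈ Finset.range (τ ω), φ (X j ω)‖₊ : ℝ≥0∞) ≤ ∑' i, (‖F i ω‖₊ : ℝ≥0∞) := by
          filter_upwards [hDae] with ω hω
          calc (‖∑ j ∈ Finset.range (τ ω), φ (X j ω)‖₊ : ℝ≥0∞)
              ≤ ∑ j ∈ Finset.range (τ ω), (‖φ (X j ω)‖₊ : ℝ≥0∞) := by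
                rw [← ENNReal.coe_finset_sum]
                exact ENNReal.coe_le_coe.mpr (nnnorm_sum_le _ _)
            _ = ∑ j ∈ Finset.range (τ ω), (‖F j ω‖₊ : ℝ≥0∞) := by
                refine Finset.sum_congr rfl fun j hj => ?_
                rw [Finset.mem_range] at hj
                rw [hF]
                simp only
                rw [hindval ω hω j, if_pos hj, one_mul]
            _ ≤ ∑' i, (‖F i ω‖₊ : ℝ≥0∞) := ENNReal.sum_le_tsum _
        calc ∫⁻ ω, ‖∑ j ∈ Finset.range (τ ω), φ (X j ω)‖₊ ∂ℙ
            ≤ ∫⁻ ω, ∑' i, (‖F i ω‖₊ : ℝ≥0∞) ∂ℙ := lintegral_mono_ae hptwise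
          _ = ∑' i, ∫⁻ ω, ‖F i ω‖₊ ∂ℙ :=
              lintegral_tsum fun i => ((hFm i).nnnorm.coe_nnreal_ennreal).aemeasurable
          _ < ⊤ := lt_top_iff_ne_top.mpr htsum_ne
      refine ⟨⟨hmeasSum.aestronglyMeasurable, hfi⟩, ?_⟩
      have hI := integral_tsum (fun i => (hFint i).aestronglyMeasurable) htsum_ne
      have hval : ∫ ω, (∑ j ∈ Finset.range (τ ω), φ (X j ω)) = ∑' i, ∫ ω, F i ω := by
        rw [← integral_congr_ae haes, hI]
      rw [hval]
      have hm2r : m2.toReal = ∑' i, (ℙ (A i)).toReal := by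
        rw [hm2]
        exact ENNReal.tsum_toReal_eq hAine
      calc ∑' i, ∫ ω, F i ω
          = ∑' i, (ℙ (A i)).toReal * ∫ ω, φ (X 0 ω) := tsum_congr hFeq
        _ = (∑' i, (ℙ (A i)).toReal) * ∫ ω, φ (X 0 ω) := tsum_mul_right
        _ = m2.toReal * ∫ ω, φ (X 0 ω) := by rw [hm2r]
    -- apply Wald
    have hτsum : (fun ω => ∑ j ∈ Finset.range (τ ω), (1:ℝ)) = τR := by
      funext ω
      simp [hτR]
    obtain ⟨hτRint0, hτRval0⟩ := hwald (fun _ => (1:ℝ)) measurable_const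
      (fun i => integrable_const 1)
    rw [hτsum] at hτRint0 hτRval0
    have hτRval : ∫ ω, τR ω = m2.toReal := by
      rw [hτRval0]
      simp
    obtain ⟨hdomint, _⟩ := hwald (fun v => ‖v‖) measurable_norm hInorm
    have hSτint : Integrable Sτ ℙ := by
      refine Integrable.mono' hdomint hSτm.aestronglyMeasurable
        (Eventually.of_forall fun ω => ?_)
      exact norm_sum_le _ _
    have hcoordval : ∀ k : Fin d, ∫ ω, Sτ ω k = m2.toReal * μ k := by
      intro k
      obtain ⟨_, hval⟩ := hwald (fun v => v k) (measurable_pi_apply k) (fun i => hIcoord i k)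
      have hswap : (fun ω => Sτ ω k) = fun ω => ∑ j ∈ Finset.range (τ ω), X j ω k := by
        funext ω
        exact Finset.sum_apply k (Finset.range (τ ω)) fun j => X j ω
      rw [hswap, hval, hEcoord 0 k]
    have hZint : Integrable Z ℙ := hτRint0.prodMk hSτint
    have hEZ : (∫ ω, Z ω) = (m2.toReal, m2.toReal • μ) := by
      have hfst := ContinuousLinearMap.integral_comp_comm
        (ContinuousLinearMap.fst ℝ ℝ (Fin d → ℝ)) hZint
      have hsnd := ContinuousLinearMap.integral_comp_comm
        (ContinuousLinearMap.snd ℝ ℝ (Fin d → ℝ)) hZint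
      refine Prod.ext ?_ ?_
      · have h1 : ∫ ω, (ContinuousLinearMap.fst ℝ ℝ (Fin d → ℝ)) (Z ω) = ∫ ω, τR ω :=
          integral_congr_ae (Eventually.of_forall fun ω => by simp [hZ])
        calc (∫ ω, Z ω).1 = ∫ ω, τR ω := by rw [← h1, hfst]; simp
          _ = m2.toReal := hτRval
      · have h1 : ∫ ω, (ContinuousLinearMap.snd ℝ ℝ (Fin d → ℝ)) (Z ω) = ∫ ω, Sτ ω :=
          integral_congr_ae (Eventually.of_forall fun ω => by simp [hZ])
        have h2 : (∫ ω, Z ω).2 = ∫ ω, Sτ ω := by rw [← h1, hsnd]; simp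
        rw [h2]
        funext k
        have hk := ContinuousLinearMap.integral_comp_comm
          (ContinuousLinearMap.proj (R := ℝ) (φ := fun _ : Fin d => ℝ) k) hSτint
        simp only [ContinuousLinearMap.proj_apply] at hk
        rw [← hk, hcoordval k]
        simp [smul_eq_mul]
    -- apply the barycenter lemma
    have hmem : (m2.toReal, m2.toReal • μ) ∈ R := by
      rw [← hEZ]
      refine barycenter_aux (Module.finrank ℝ (ℝ × (Fin d → ℝ))) (ℝ × (Fin d → ℝ)) le_rfl
        ℙ R hR Z hZm hZint ?_
      intro B hB hBR
      have hpieces : Z ⁻¹' B ⊆ Dᶜ ∪ ⋃ n, (Z ⁻¹' B ∩ (τ ⁻¹' {n} ∩ D)) := by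
        intro ω hω
        by_cases h : ω ∈ D
        · exact Or.inr (mem_iUnion.mpr ⟨τ ω, hω, rfl, h⟩)
        · exact Or.inl h
      refine measure_mono_null hpieces (measure_union_null hDc (measure_iUnion_null fun n => ?_))
      set Bn : Set (Fin n → Fin d → ℝ) :=
        {a | (((n:ℕ):ℝ), ∑ i, a i) ∈ B} ∩ Gm n ∩
          ⋂ (m : ℕ) (h : m < n), ((fun (a : Fin n → Fin d → ℝ) (j : Fin m) =>
            a (Fin.castLE (le_of_lt h) j)) ⁻¹' (Gm m))ᶜ with hBn
      have hBnm : MeasurableSet Bn := by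
        refine (MeasurableSet.inter ?_ (measurableSet_toMeasurable _ _)).inter ?_
        · refine MeasurableSet.preimage hB ?_
          exact measurable_const.prodMk (Finset.measurable_sum _ fun i _ => measurable_pi_apply i)
        · refine MeasurableSet.iInter fun m => MeasurableSet.iInter fun h => ?_
          exact ((measurable_pi_lambda _ fun j => measurable_pi_apply _)
            (measurableSet_toMeasurable _ _)).compl
      have hpieceeq : Z ⁻¹' B ∩ (τ ⁻¹' {n} ∩ D) = P n ⁻¹' Bn := by
        ext ω
        simp only [hBn, mem_inter_iff, mem_preimage, mem_singleton_iff, mem_setOf_eq,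
          mem_iInter, mem_compl_iff]
        constructor
        · rintro ⟨hωB, hτn, hωD⟩
          have hZω : Z ω = (((n:ℕ):ℝ), S n ω) := by
            show ((τ ω : ℝ), S (τ ω) ω) = (((n:ℕ):ℝ), S n ω)
            rw [hτn]
          refine ⟨⟨?_, ?_⟩, ?_⟩
          · have hBmem : (((n:ℕ):ℝ), S n ω) ∈ B := hZω ▸ hωB
            have hPsum : (∑ i : Fin n, P n ω i) = S n ω :=
              Fin.sum_univ_eq_sum_range (fun i => X i ω) n
            rw [hPsum]
            exact hBmem
          · exact hτn ▸ hτmem ω hωD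
          · intro m hm hGmm
            have hHm' : ω ∈ H m := hGmm
            have := hτle ω m hHm'
            omega
        · rintro ⟨⟨hωB, hωH⟩, hmin⟩
          have hωD : ω ∈ D := mem_iUnion.mpr ⟨n, hωH⟩
          have hτn : τ ω = n := by
            have h1 : τ ω ≤ n := hτle ω n hωH
            have h2 : ¬ τ ω < n := fun hlt => hmin (τ ω) hlt (hτmem ω hωD)
            omega
          refine ⟨?_, hτn, hωD⟩
          have hZω : Z ω = (((n:ℕ):ℝ), S n ω) := by
            show ((τ ω : ℝ), S (τ ω) ω) = (((n:ℕ):ℝ), S n ω)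
            rw [hτn]
          have hPsum : (∑ i : Fin n, P n ω i) = S n ω :=
            Fin.sum_univ_eq_sum_range (fun i => X i ω) n
          rw [hZω, ← hPsum]
          exact hωB
      rw [hpieceeq]
      refine htight n Bn hBnm ?_ ?_
      · intro ω hω
        exact hω.1.2
      · ext ω
        simp only [mem_inter_iff, mem_preimage, mem_empty_iff_false, iff_false, not_and]
        intro hωBn hωG
        have h1 : (((n:ℕ):ℝ), ∑ i, P n ω i) ∈ B := hωBn.1.1
        have h2 : (((n:ℕ):ℝ), ∑ i, P n ω i) ∈ R := hωG.2
        have : (((n:ℕ):ℝ), ∑ i, P n ω i) ∈ B ∩ R := ⟨h1, h2⟩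
        rw [hBR] at this
        exact this
    refine ⟨m2.toReal, ENNReal.toReal_nonneg, hmem, ?_⟩
    rw [ENNReal.ofReal_toReal hm2ne]
    exact hm2le
  -- conclude
  constructor
  · intro _
    by_cases hfin : (∫⁻ ω, N ω) = ⊤
    · rw [hfin]
      exact le_top
    · obtain ⟨t, ht0, htR, htle⟩ := main hfin
      refine le_trans (ENNReal.ofReal_le_ofReal ?_) htle
      exact csInf_le ⟨0, fun x hx => hx.1⟩ ⟨ht0, htR⟩
  · intro hempty
    by_contra hfin
    obtain ⟨t, ht0, htR, _⟩ := main hfin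
    have hmem : t ∈ {t : ℝ | 0 ≤ t ∧ (t, t • μ) ∈ R} := ⟨ht0, htR⟩
    rw [hempty] at hmem
    exact hmem
end
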